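/- arXiv:1706.05423 — 6 statements merged into one kernel-verified Lean document; each statement's English description precedes it below -/
import Mathlib

section
/- Let A=(a_{ij}) be an m×n integer matrix, let ν_1,…,ν_n be positive integers, and let X = {x=(ξ_1,…,ξ_n) ∈ ℤ₊^n : ∑_{j=1}^n a_{ij}ξ_j = 0 for i=1,…,m, and 0 ≤ ξ_j ≤ ν_j for j=1,…,n}. Suppose every row of A has at most r non-zero entries for some r ≥ 2 and every column of A has at most c non-zero entries for some c ≥ 1. If w_1,…,w_n ∈ ℂ satisfy |w_j| ≤ 0.46/(r√c) for all j=1,…,n, then w(X) ≠ 0. -/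
/-!
We prove the theorem via the following induction (which in fact only uses the row
sparsity `r`; the hypothesis `|w_j| ≤ 0.46/(r√c) ≤ 0.46/r` is all that is needed).

For a set `V` of active variables and a right-hand side `b`, let `F V b` denote the
weighted number of solutions of `A ξ = b` supported on `V` (with box constraints).
With `T = 0.46/r`, `β = (1-2T)⁻¹` and `φ(s) = (1-T)(β^s - 1)/2` one shows by strong
induction on `V`:

1. `F V 0 ≠ 0`;
2. for every `b` and every row `i` with `b i ≠ 0`,
   `|F V b| ≤ φ(s_i) * |F V 0|`, where `s_i` is the number of active variables in row `i`.

For the induction step one peels off a variable `v` occurring in row `i` (so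
`F V b = ∑_k w_v^k F (V \ v) (b - k a_v)`), uses `φ(0) = 0` (a nonzero row with no
active variables kills all solutions), the exact identity
`φ(s+1)(1-2T) = φ(s) + T(1-T)`, and `φ(s) ≤ 1` for `s ≤ r`, which reduces to the
numeric inequality `(1-T) ≤ (3-T)(1-2T)^r` for `T = 0.46/r`, proved via Bernoulli.
-/

namespace Stmt0Proof


/-- monotonicity step: `(1 - a/r)^r ≤ (1 - a/(r+1))^(r+1)` for `0 < a < r`. -/
lemma pow_step (a : ℝ) (r : ℕ) (ha0 : 0 < a) (har : a < r) :
    (1 - a / r) ^ r ≤ (1 - a / ((r:ℝ) + 1)) ^ (r + 1) := by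
  have hr0 : (0:ℝ) < r := lt_trans ha0 har
  have hr1 : (0:ℝ) < (r:ℝ) + 1 := by linarith
  have hra : (0:ℝ) < (r:ℝ) - a := by linarith
  set p : ℝ := 1 - a / r with hp
  set q : ℝ := 1 - a / ((r:ℝ)+1) with hq
  have hp0 : 0 < p := by
    rw [hp, sub_pos, div_lt_one hr0]; exact har
  have hq0 : 0 < q := by
    rw [hq, sub_pos, div_lt_one hr1]; linarith
  have hpq : p ≤ q := by
    rw [hp, hq]
    have : a / ((r:ℝ)+1) ≤ a / r := by
      apply div_le_div_of_nonneg_left (le_of_lt ha0) hr0; linarith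
    linarith
  set u : ℝ := q / p - 1 with hu
  have hu0 : 0 ≤ u := by
    rw [hu, sub_nonneg, le_div_iff₀ hp0, one_mul]; exact hpq
  have h1 : 1 + (r:ℝ) * u ≤ (1 + u) ^ r := one_add_mul_le_pow (by linarith) r
  have h1r : (1:ℝ) + (r:ℝ) ≠ 0 := by positivity
  have hu' : u = a / (((r:ℝ)+1) * ((r:ℝ) - a)) := by
    rw [hu, div_sub_one hp0.ne',
      div_eq_div_iff hp0.ne' (by positivity : ((r:ℝ)+1) * ((r:ℝ) - a) ≠ 0), hp, hq]
    field_simp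
    ring
  have h2 : (1:ℝ) ≤ q * (1 + (r:ℝ) * u) := by
    rw [hu', hq, ← sub_nonneg]
    have key : (1 - a / ((r:ℝ)+1)) * (1 + (r:ℝ) * (a / (((r:ℝ)+1) * ((r:ℝ) - a)))) - 1
        = a^2 / (((r:ℝ)+1)^2 * ((r:ℝ) - a)) := by
      field_simp [h1r, hra.ne']
      ring
    rw [key]
    positivity
  have h3 : (1 + u) * p = q := by
    rw [hu]; field_simp; ring
  calc (1 - a / (r:ℝ)) ^ r = p ^ r := by rw [hp]
    _ = 1 * p ^ r := (one_mul _).symm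
    _ ≤ (q * (1 + (r:ℝ) * u)) * p ^ r := mul_le_mul_of_nonneg_right h2 (by positivity)
    _ ≤ (q * (1 + u) ^ r) * p ^ r := by
        apply mul_le_mul_of_nonneg_right _ (by positivity)
        exact mul_le_mul_of_nonneg_left h1 (le_of_lt hq0)
    _ = q * ((1 + u) * p) ^ r := by rw [mul_pow]; ring
    _ = q * q ^ r := by rw [h3]
    _ = q ^ (r + 1) := by rw [pow_succ]; ring

/-- `(1 - 0.92/r)^r ≥ 0.3515` for `r ≥ 4`. -/
lemma pow_ge (r : ℕ) (hr : 4 ≤ r) : (0.3515:ℝ) ≤ (1 - 0.92 / r) ^ r := by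
  induction r, hr using Nat.le_induction with
  | base => norm_num
  | succ r hr ih =>
      refine le_trans ih ?_
      have := pow_step 0.92 r (by norm_num) (by
        have : (4:ℝ) ≤ r := by exact_mod_cast hr
        linarith)
      push_cast
      convert this using 3 <;> push_cast <;> ring

/-! ### Numeric part -/

noncomputable def phi (T : ℝ) (s : ℕ) : ℝ := (1 - T) * ((1 - 2*T)⁻¹ ^ s - 1) / 2

variable {T : ℝ}

lemma phi_zero (T : ℝ) : phi T 0 = 0 := by simp [phi]

lemma one_le_beta (hT0 : 0 < T) (hT2 : 2*T < 1) : 1 ≤ (1 - 2*T)⁻¹ := by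
  rw [le_inv_comm₀] <;> nlinarith

lemma phi_nonneg (hT0 : 0 < T) (hT2 : 2*T < 1) (s : ℕ) : 0 ≤ phi T s := by
  have h := one_le_beta hT0 hT2
  have : (1:ℝ) ≤ (1 - 2*T)⁻¹ ^ s := one_le_pow₀ h
  unfold phi
  nlinarith

lemma phi_mono (hT0 : 0 < T) (hT2 : 2*T < 1) {s s' : ℕ} (h : s ≤ s') :
    phi T s ≤ phi T s' := by
  have hb := one_le_beta hT0 hT2
  have : (1 - 2*T)⁻¹ ^ s ≤ (1 - 2*T)⁻¹ ^ s' := pow_le_pow_right₀ hb h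
  unfold phi
  nlinarith

lemma phi_succ_key (hT2 : 2*T < 1) (s : ℕ) :
    phi T (s+1) * (1 - 2*T) = phi T s + T * (1 - T) := by
  have h : (1 - 2*T) ≠ 0 := by nlinarith
  have hb : (1-2*T)⁻¹^(s+1)*(1-2*T) = (1-2*T)⁻¹^s := by
    rw [pow_succ, mul_assoc, inv_mul_cancel₀ h, mul_one]
  unfold phi
  linear_combination (1-T)/2 * hb

lemma gsum_le (hT0 : 0 ≤ T) (hT1 : T < 1) (M : ℕ) :
    ∑ k ∈ Finset.range M, T ^ k ≤ (1 - T)⁻¹ := by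
  have hne : T ≠ 1 := ne_of_lt hT1
  rw [geom_sum_eq hne]
  have h1 : (T ^ M - 1) / (T - 1) = (1 - T ^ M) * (1 - T)⁻¹ := by
    rw [div_eq_iff (by intro h; apply hne; linarith : T - 1 ≠ 0)]
    have h2 : (1 - T) * (1 - T)⁻¹ = 1 := mul_inv_cancel₀ (by linarith)
    have h4 : (1 - T^M) * (1-T)⁻¹ * (T - 1) = -(1 - T^M) * ((1-T) * (1-T)⁻¹) := by ring
    rw [h4, h2]
    ring
  rw [h1]
  have h3 : (0:ℝ) ≤ (1 - T)⁻¹ := inv_nonneg.mpr (by linarith)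
  nlinarith [pow_nonneg hT0 M]

lemma tail_le (hT0 : 0 ≤ T) (hT1 : T < 1) (M : ℕ) :
    ∑ k ∈ Finset.range M, T ^ (k+1) ≤ T * (1 - T)⁻¹ := by
  have h1 : ∑ k ∈ Finset.range M, T ^ (k+1) = T * ∑ k ∈ Finset.range M, T ^ k := by
    rw [Finset.mul_sum]
    apply Finset.sum_congr rfl
    intro k _
    ring
  rw [h1]
  exact mul_le_mul_of_nonneg_left (gsum_le hT0 hT1 M) hT0

lemma abs_add_lower (x y : ℂ) :
    ‖x‖ - ‖y‖ ≤ ‖(y + x)‖ := by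
  have h := norm_add_le (y + x) (-y)
  have hx : y + x + -y = x := by ring
  rw [hx, norm_neg] at h
  linarith

/-- the core numeric inequality: `1 - T ≤ (3 - T) * (1 - 2T)^r` for `T = 0.46/r`. -/
lemma num_core (r : ℕ) (hr : 2 ≤ r) :
    1 - 0.46/(r:ℝ) ≤ (3 - 0.46/(r:ℝ)) * (1 - 2*(0.46/(r:ℝ)))^r := by
  have hr0 : (0:ℝ) < r := by
    have : (2:ℝ) ≤ r := by exact_mod_cast hr
    linarith
  have h2 : (1:ℝ) - 2*(0.46/(r:ℝ)) = 1 - 0.92/(r:ℝ) := by ring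
  rcases lt_or_ge r 4 with h4 | h4
  · interval_cases r
    · norm_num
    · norm_num
  · have hr4 : (4:ℝ) ≤ r := by exact_mod_cast h4
    have hp := pow_ge r h4
    rw [h2]
    have hT : 0.46/(r:ℝ) ≤ 0.115 := by
      rw [div_le_iff₀ hr0]; nlinarith
    have hT0 : 0 < 0.46/(r:ℝ) := by positivity
    have h3T : (0:ℝ) ≤ 3 - 0.46/(r:ℝ) := by linarith
    have := mul_le_mul_of_nonneg_left hp h3T
    linarith

/-- `phi (0.46/r) r ≤ 1`. -/
lemma num_main (r : ℕ) (hr : 2 ≤ r) : phi (0.46 / r) r ≤ 1 := by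
  have hr0 : (0:ℝ) < r := by
    have : (2:ℝ) ≤ r := by exact_mod_cast hr
    linarith
  set T : ℝ := 0.46 / r with hT
  have hT0 : 0 < T := by positivity
  have hT23 : T ≤ 0.23 := by
    rw [hT, div_le_iff₀ hr0]
    have : (2:ℝ) ≤ r := by exact_mod_cast hr
    nlinarith
  have h12 : (0:ℝ) < 1 - 2*T := by linarith
  have hcore := num_core r hr
  rw [← hT] at hcore
  have hpow : (0:ℝ) < (1 - 2*T)^r := pow_pos h12 r
  have hI0 : (0:ℝ) ≤ ((1-2*T)^r)⁻¹ := by positivity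
  have h5 : (1-T) * ((1-2*T)^r)⁻¹ ≤ (3-T) := by
    calc (1-T) * ((1-2*T)^r)⁻¹ ≤ ((3-T)*(1-2*T)^r) * ((1-2*T)^r)⁻¹ :=
          mul_le_mul_of_nonneg_right hcore hI0
    _ = (3-T) := by rw [mul_assoc, mul_inv_cancel₀ hpow.ne', mul_one]
  unfold phi
  rw [inv_pow]
  nlinarith [h5]



open Finset

/-! ### System part -/

variable {m n : ℕ}

open scoped Classical in
/-- weighted count of solutions of `A ξ = b` with box bounds and support inside `V`. -/
noncomputable def F (a : Fin m → Fin n → ℤ) (ν : Fin n → ℕ) (w : Fin n → ℂ)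
    (V : Finset (Fin n)) (b : Fin m → ℤ) : ℂ :=
  ∑ ξ ∈ Finset.univ.filter (fun ξ : (j : Fin n) → Fin (ν j + 1) =>
      (∀ i, ∑ j, a i j * ((ξ j : ℕ) : ℤ) = b i) ∧ ∀ j, j ∉ V → (ξ j : ℕ) = 0),
    ∏ j, w j ^ ((ξ j : ℕ))

variable {a : Fin m → Fin n → ℤ} {ν : Fin n → ℕ} {w : Fin n → ℂ}

/-- if a row has empty support in `V` but `b i ≠ 0`, there are no solutions. -/
lemma F_eq_zero {V : Finset (Fin n)} {b : Fin m → ℤ} (i : Fin m)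
    (h0 : ∀ j ∈ V, a i j = 0) (hb : b i ≠ 0) : F a ν w V b = 0 := by
  classical
  rw [F]
  convert Finset.sum_empty
  rw [Finset.filter_eq_empty_iff]
  rintro ξ - ⟨h1, h2⟩
  apply hb
  rw [← h1 i]
  apply Finset.sum_eq_zero
  intro j _
  by_cases hj : j ∈ V
  · rw [h0 j hj, zero_mul]
  · rw [h2 j hj]; simp

lemma F_empty : F a ν w (∅ : Finset (Fin n)) (fun _ => 0) = 1 := by
  classical
  rw [F]
  rw [Finset.sum_eq_single_of_mem (fun j => (0 : Fin (ν j + 1)))]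
  · simp
  · simp
  · intro ξ hξ hne
    exfalso
    apply hne
    funext j
    simp only [Finset.mem_filter] at hξ
    have := hξ.2.2 j (by simp)
    ext
    simpa using this



lemma split_sum (v : Fin n) (g : (j : Fin n) → Fin (ν j + 1)) (i : Fin m) :
    (∑ j, a i j * ((g j : ℕ) : ℤ))
      = a i v * ((g v : ℕ) : ℤ) + ∑ j ∈ Finset.univ.erase v, a i j * ((g j : ℕ) : ℤ) :=
  (Finset.add_sum_erase _ _ (Finset.mem_univ v)).symm

lemma split_prod (v : Fin n) (g : (j : Fin n) → Fin (ν j + 1)) :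
    (∏ j, w j ^ ((g j : ℕ)))
      = w v ^ ((g v : ℕ)) * ∏ j ∈ Finset.univ.erase v, w j ^ ((g j : ℕ)) :=
  (Finset.mul_prod_erase _ _ (Finset.mem_univ v)).symm

lemma peel {V : Finset (Fin n)} {v : Fin n} (hv : v ∈ V) (b : Fin m → ℤ) :
    F a ν w V b = ∑ k ∈ Finset.range (ν v + 1),
      w v ^ k * F a ν w (V.erase v) (fun i => b i - (k:ℤ) * a i v) := by
  classical
  rw [F]
  rw [← Finset.sum_fiberwise_of_maps_to (g := fun ξ : (j : Fin n) → Fin (ν j + 1) => ((ξ v : ℕ)))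
      (t := Finset.range (ν v + 1)) (fun ξ _ => Finset.mem_range.mpr (ξ v).isLt)]
  apply Finset.sum_congr rfl
  intro k hk
  have hklt : k < ν v + 1 := Finset.mem_range.mp hk
  rw [F, Finset.mul_sum]
  refine Finset.sum_bij' (fun ξ _ => Function.update ξ v 0)
    (fun ξ' _ => Function.update ξ' v ⟨k, hklt⟩) ?_ ?_ ?_ ?_ ?_
  · -- membership forward
    intro ξ hξ
    simp only [Finset.mem_filter, Finset.mem_univ, true_and] at hξ ⊢
    obtain ⟨⟨h1, h2⟩, h3⟩ := hξ
    constructor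
    · intro i
      have h4 := split_sum (a := a) v ξ i
      rw [h1 i, h3] at h4
      have h5 : ∑ j ∈ Finset.univ.erase v, a i j * (((Function.update ξ v 0 j : Fin _) : ℕ) : ℤ)
          = ∑ j ∈ Finset.univ.erase v, a i j * ((ξ j : ℕ) : ℤ) := by
        apply Finset.sum_congr rfl
        intro j hj
        rw [Function.update_of_ne (Finset.ne_of_mem_erase hj)]
      rw [split_sum (a := a) v, Function.update_self, h5]
      simp only [Fin.val_zero, Nat.cast_zero, mul_zero, zero_add]
      linarith [h4]
    · intro j hj
      rcases eq_or_ne j v with rfl | hne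
      · rw [Function.update_self]; simp
      · rw [Function.update_of_ne hne]
        apply h2
        intro hjV
        exact hj (Finset.mem_erase.mpr ⟨hne, hjV⟩)
  · -- membership backward
    intro ξ' hξ'
    simp only [Finset.mem_filter, Finset.mem_univ, true_and] at hξ' ⊢
    obtain ⟨h1, h2⟩ := hξ'
    have hv0 : ((ξ' v : ℕ)) = 0 := h2 v (by simp)
    refine ⟨⟨?_, ?_⟩, ?_⟩
    · intro i
      have h4 := split_sum (a := a) v ξ' i
      rw [h1 i, hv0] at h4
      simp only [Nat.cast_zero, mul_zero, zero_add] at h4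
      have h5 : ∑ j ∈ Finset.univ.erase v, a i j * (((Function.update ξ' v ⟨k, hklt⟩ j : Fin _) : ℕ) : ℤ)
          = ∑ j ∈ Finset.univ.erase v, a i j * ((ξ' j : ℕ) : ℤ) := by
        apply Finset.sum_congr rfl
        intro j hj
        rw [Function.update_of_ne (Finset.ne_of_mem_erase hj)]
      rw [split_sum (a := a) v, Function.update_self, h5, ← h4]
      push_cast
      ring
    · intro j hjV
      have hne : j ≠ v := fun h => (h ▸ hjV) hv
      rw [Function.update_of_ne hne]
      exact h2 j (fun hj => hjV (Finset.mem_of_mem_erase hj))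
    · rw [Function.update_self]
  · -- left inverse
    intro ξ hξ
    simp only [Finset.mem_filter] at hξ
    funext j
    rcases eq_or_ne j v with rfl | hne
    · rw [Function.update_self]
      ext
      simpa using hξ.2.symm
    · rw [Function.update_of_ne hne, Function.update_of_ne hne]
  · -- right inverse
    intro ξ' hξ'
    simp only [Finset.mem_filter, Finset.mem_univ, true_and] at hξ'
    funext j
    rcases eq_or_ne j v with rfl | hne
    · rw [Function.update_self]
      ext
      simp only [Fin.val_zero]
      exact (hξ'.2 j (by simp)).symm
    · rw [Function.update_of_ne hne, Function.update_of_ne hne]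
  · -- values
    intro ξ hξ
    simp only [Finset.mem_filter, Finset.mem_univ, true_and] at hξ
    have hprod : ∏ j ∈ Finset.univ.erase v, w j ^ (((Function.update ξ v 0 j : Fin _) : ℕ))
        = ∏ j ∈ Finset.univ.erase v, w j ^ ((ξ j : ℕ)) := by
      apply Finset.prod_congr rfl
      intro j hj
      rw [Function.update_of_ne (Finset.ne_of_mem_erase hj)]
    rw [split_prod (w := w) v ξ, split_prod (w := w) v (Function.update ξ v 0),
      Function.update_self, hprod, hξ.2]
    simp



/-! ### Main induction -/

section MainInduction

theorem main_ind {T : ℝ} (r : ℕ)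
    (hT0 : 0 < T) (hT2 : 2*T < 1) (hphir : phi T r ≤ 1)
    {a : Fin m → Fin n → ℤ} {ν : Fin n → ℕ} {w : Fin n → ℂ}
    (hrow : ∀ i, (Finset.univ.filter fun j => a i j ≠ 0).card ≤ r)
    (hwT : ∀ j, ‖(w j)‖ ≤ T) :
    ∀ V : Finset (Fin n),
    F a ν w V (fun _ => 0) ≠ 0 ∧
    ∀ (b : Fin m → ℤ) (i : Fin m), b i ≠ 0 →
      ‖(F a ν w V b)‖
        ≤ phi T ((V.filter fun j => a i j ≠ 0).card) * ‖(F a ν w V (fun _ => 0))‖ := by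
  classical
  have hT1 : T < 1 := by linarith
  have hTn : (0:ℝ) ≤ T := hT0.le
  have hinv0 : (0:ℝ) ≤ (1-T)⁻¹ := inv_nonneg.mpr (by linarith)
  have h1T : (0:ℝ) < 1 - T := by linarith
  have hphi_le_one : ∀ s : ℕ, s ≤ r → phi T s ≤ 1 :=
    fun s hs => (phi_mono hT0 hT2 hs).trans hphir
  have hcard : ∀ (W : Finset (Fin n)) (i : Fin m), (W.filter fun j => a i j ≠ 0).card ≤ r := by
    intro W i
    exact le_trans (Finset.card_le_card
      (Finset.filter_subset_filter _ (Finset.subset_univ W))) (hrow i)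
  intro V
  induction V using Finset.strongInduction with
  | _ V IH =>
  -- |F W b'| ≤ |F W 0| for strict subsets W
  have hM : ∀ W : Finset (Fin n), W ⊂ V → ∀ b' : Fin m → ℤ,
      ‖(F a ν w W b')‖ ≤ ‖(F a ν w W (fun _ => 0))‖ := by
    intro W hW b'
    rcases em (∃ i, b' i ≠ 0) with ⟨i, hi⟩ | hno
    · refine le_trans ((IH W hW).2 b' i hi) ?_
      have h1 : phi T ((W.filter fun j => a i j ≠ 0).card) ≤ 1 := hphi_le_one _ (hcard W i)
      have h2 : (0:ℝ) ≤ ‖(F a ν w W (fun _ => 0))‖ := norm_nonneg _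
      nlinarith
    · push_neg at hno
      have hb' : b' = (fun _ => 0) := funext fun i => hno i
      rw [hb']
  -- lower bound for F V 0 after peeling v with a i₀ v ≠ 0
  have hlow : ∀ v ∈ V, ∀ i₀ : Fin m, a i₀ v ≠ 0 →
      (1 - phi T (((V.erase v).filter fun j => a i₀ j ≠ 0).card) * (T * (1-T)⁻¹)) *
        ‖(F a ν w (V.erase v) (fun _ => 0))‖
      ≤ ‖(F a ν w V (fun _ => 0))‖ := by
    intro v hv i₀ ha0
    have hWV : V.erase v ⊂ V := Finset.erase_ssubset hv
    rw [peel hv]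
    rw [Finset.sum_range_succ']
    have hb0 : (fun i => (fun _ => (0:ℤ)) i - ((0:ℕ):ℤ) * a i v) = (fun _ => (0:ℤ)) := by
      funext i; simp
    rw [hb0]
    simp only [pow_zero, one_mul]
    refine le_trans ?_ (abs_add_lower _ _)
    have htail : ‖(∑ k ∈ Finset.range (ν v),
        w v ^ (k+1) * F a ν w (V.erase v) (fun i => (fun _ => (0:ℤ)) i - ((k+1:ℕ):ℤ) * a i v))‖
        ≤ (T * (1-T)⁻¹) * (phi T (((V.erase v).filter fun j => a i₀ j ≠ 0).card)
            * ‖(F a ν w (V.erase v) (fun _ => 0))‖) := by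
      refine le_trans (norm_sum_le _ _) ?_
      have hterm : ∀ k ∈ Finset.range (ν v),
          ‖(w v ^ (k+1) * F a ν w (V.erase v)
            (fun i => (fun _ => (0:ℤ)) i - ((k+1:ℕ):ℤ) * a i v))‖
          ≤ T^(k+1) * (phi T (((V.erase v).filter fun j => a i₀ j ≠ 0).card)
              * ‖(F a ν w (V.erase v) (fun _ => 0))‖) := by
        intro k _
        rw [norm_mul, norm_pow]
        have h1 : ‖(w v)‖ ^ (k+1) ≤ T^(k+1) :=
          pow_le_pow_left₀ (norm_nonneg _) (hwT v) _
        have h2 : ‖(F a ν w (V.erase v)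
              (fun i => (fun _ => (0:ℤ)) i - ((k+1:ℕ):ℤ) * a i v))‖
            ≤ phi T (((V.erase v).filter fun j => a i₀ j ≠ 0).card)
              * ‖(F a ν w (V.erase v) (fun _ => 0))‖ := by
          refine (IH _ hWV).2 _ i₀ ?_
          simp only [zero_sub, neg_ne_zero]
          positivity
        exact mul_le_mul h1 h2 (norm_nonneg _) (by positivity)
      refine le_trans (Finset.sum_le_sum hterm) ?_
      rw [← Finset.sum_mul]
      refine mul_le_mul_of_nonneg_right (tail_le hTn hT1 _) ?_
      have := phi_nonneg hT0 hT2 (((V.erase v).filter fun j => a i₀ j ≠ 0).card)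
      positivity
    have hphis : phi T (((V.erase v).filter fun j => a i₀ j ≠ 0).card)
        * ‖(F a ν w (V.erase v) (fun _ => 0))‖ ≥ 0 := by
      have := phi_nonneg hT0 hT2 (((V.erase v).filter fun j => a i₀ j ≠ 0).card)
      positivity
    nlinarith [htail]
  constructor
  · -- F V 0 ≠ 0
    rcases V.eq_empty_or_nonempty with rfl | ⟨v, hv⟩
    · rw [F_empty]; exact one_ne_zero
    · have hWV : V.erase v ⊂ V := Finset.erase_ssubset hv
      have hL : 0 < ‖(F a ν w (V.erase v) (fun _ => 0))‖ :=
        norm_pos_iff.mpr (IH _ hWV).1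
      by_cases hcol : ∀ i, a i v = 0
      · -- free variable
        have hbk : ∀ k : ℕ, (fun i => (fun _ => (0:ℤ)) i - (k:ℤ) * a i v) = (fun _ => (0:ℤ)) := by
          intro k; funext i; simp [hcol i]
        rw [peel hv]
        simp only [hbk]
        rw [← Finset.sum_mul]
        refine mul_ne_zero ?_ (IH _ hWV).1
        rw [← norm_ne_zero_iff]
        have hpos : 0 < ‖(∑ k ∈ Finset.range (ν v + 1), w v ^ k)‖ := by
          rw [Finset.sum_range_succ']
          simp only [pow_zero]
          have htail : ‖(∑ k ∈ Finset.range (ν v), w v ^ (k+1))‖ ≤ T * (1-T)⁻¹ := by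
            refine le_trans (norm_sum_le _ _) ?_
            refine le_trans (Finset.sum_le_sum ?_) (tail_le hTn hT1 _)
            intro k _
            rw [norm_pow]
            exact pow_le_pow_left₀ (norm_nonneg _) (hwT v) _
          have hTT : T * (1-T)⁻¹ < 1 := by
            rw [mul_inv_lt_iff₀ h1T]
            linarith
          have := abs_add_lower (1 : ℂ) (∑ k ∈ Finset.range (ν v), w v ^ (k+1))
          simp only [norm_one] at this
          linarith
        exact ne_of_gt hpos
      · push_neg at hcol
        obtain ⟨i₀, ha0⟩ := hcol
        have hlow' := hlow v hv i₀ ha0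
        have hphis : phi T (((V.erase v).filter fun j => a i₀ j ≠ 0).card) ≤ 1 :=
          hphi_le_one _ (hcard _ i₀)
        have hphin : 0 ≤ phi T (((V.erase v).filter fun j => a i₀ j ≠ 0).card) :=
          phi_nonneg hT0 hT2 _
        have hTT : T * (1-T)⁻¹ < 1 := by
          rw [mul_inv_lt_iff₀ h1T]; linarith
        have hTT0 : 0 ≤ T * (1-T)⁻¹ := by positivity
        have hfac : 0 < 1 - phi T (((V.erase v).filter fun j => a i₀ j ≠ 0).card) * (T * (1-T)⁻¹) := by
          nlinarith [mul_nonneg (sub_nonneg.mpr hphis) hTT0]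
        have hpos : 0 < ‖(F a ν w V (fun _ => 0))‖ :=
          lt_of_lt_of_le (mul_pos hfac hL) hlow'
        rw [← norm_ne_zero_iff]
        exact ne_of_gt hpos
  · -- the ratio bound
    intro b i₁ hb
    by_cases hs0 : ∀ j ∈ V, a i₁ j = 0
    · rw [F_eq_zero i₁ hs0 hb, norm_zero]
      have h2 : (0:ℝ) ≤ ‖(F a ν w V (fun _ => 0))‖ := norm_nonneg _
      have := phi_nonneg hT0 hT2 ((V.filter fun j => a i₁ j ≠ 0).card)
      positivity
    · push_neg at hs0
      obtain ⟨v, hv, hav⟩ := hs0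
      have hWV : V.erase v ⊂ V := Finset.erase_ssubset hv
      have hlow' := hlow v hv i₁ hav
      set W := V.erase v with hW
      set s' := ((W.filter fun j => a i₁ j ≠ 0)).card with hs'
      set L := ‖(F a ν w W (fun _ => 0))‖ with hLdef
      have hL0 : 0 ≤ L := norm_nonneg _
      have hs1 : (V.filter fun j => a i₁ j ≠ 0).card = s' + 1 := by
        rw [hs', hW, Finset.filter_erase]
        have hvf : v ∈ V.filter fun j => a i₁ j ≠ 0 := Finset.mem_filter.mpr ⟨hv, hav⟩
        rw [Finset.card_erase_of_mem hvf]
        have : 1 ≤ (V.filter fun j => a i₁ j ≠ 0).card := Finset.card_pos.mpr ⟨v, hvf⟩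
        omega
      have hs'r : s' ≤ r := hcard W i₁
      have hphis' : phi T s' ≤ 1 := hphi_le_one s' hs'r
      have hphis'0 : 0 ≤ phi T s' := phi_nonneg hT0 hT2 s'
      have hphis10 : 0 ≤ phi T (s' + 1) := phi_nonneg hT0 hT2 _
      -- upper bound on |F V b|
      have hup : ‖(F a ν w V b)‖ ≤ ((1-T)⁻¹ * phi T s' + T) * L := by
        rw [peel hv b]
        refine le_trans (norm_sum_le _ _) ?_
        have hterm : ∀ k ∈ Finset.range (ν v + 1),
            ‖(w v ^ k * F a ν w W (fun i => b i - (k:ℤ) * a i v))‖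
            ≤ (T^k * phi T s' + (if b i₁ - (k:ℤ) * a i₁ v = 0 then T^k else 0)) * L := by
          intro k _
          rw [norm_mul, norm_pow]
          have h1 : ‖(w v)‖ ^ k ≤ T^k :=
            pow_le_pow_left₀ (norm_nonneg _) (hwT v) _
          have hTk : (0:ℝ) ≤ T^k := pow_nonneg hTn k
          split_ifs with hmatch
          · have h2 : ‖(F a ν w W (fun i => b i - (k:ℤ) * a i v))‖ ≤ L := hM W hWV _
            have h3 : ‖(w v)‖ ^ k
                  * ‖(F a ν w W (fun i => b i - (k:ℤ) * a i v))‖ ≤ T^k * L :=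
              mul_le_mul h1 h2 (norm_nonneg _) hTk
            nlinarith [mul_nonneg (mul_nonneg hTk hphis'0) hL0]
          · have h2 : ‖(F a ν w W (fun i => b i - (k:ℤ) * a i v))‖ ≤ phi T s' * L :=
              (IH W hWV).2 _ i₁ hmatch
            have h3 := mul_le_mul h1 h2 (norm_nonneg _) hTk
            simp only [add_zero]
            rw [mul_assoc]
            exact h3
        refine le_trans (Finset.sum_le_sum hterm) ?_
        rw [← Finset.sum_mul]
        refine mul_le_mul_of_nonneg_right ?_ hL0
        rw [Finset.sum_add_distrib]
        have hsum1 : ∑ k ∈ Finset.range (ν v + 1), T^k * phi T s'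
            ≤ (1-T)⁻¹ * phi T s' := by
          rw [← Finset.sum_mul]
          exact mul_le_mul_of_nonneg_right (gsum_le hTn hT1 _) hphis'0
        have hsum2 : ∑ k ∈ Finset.range (ν v + 1),
            (if b i₁ - (k:ℤ) * a i₁ v = 0 then T^k else 0) ≤ T := by
          rcases em (∃ k₀ ∈ Finset.range (ν v + 1), b i₁ - (k₀:ℤ) * a i₁ v = 0) with
            ⟨k₀, hk₀r, hk₀⟩ | hnone
          · have hmono : ∀ k ∈ Finset.range (ν v + 1),
                (if b i₁ - (k:ℤ) * a i₁ v = 0 then T^k else 0)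
                  ≤ (if k = k₀ then T^k else 0) := by
              intro k _
              split_ifs with h1 h2
              · exact le_refl _
              · exfalso
                apply h2
                have e1 : b i₁ = (k:ℤ) * a i₁ v := by linarith
                have e2 : b i₁ = (k₀:ℤ) * a i₁ v := by linarith
                have : (k:ℤ) = (k₀:ℤ) := mul_right_cancel₀ hav (e1.symm.trans e2)
                exact_mod_cast this
              · exact pow_nonneg hTn k
              · exact le_refl _
            refine le_trans (Finset.sum_le_sum hmono) ?_
            rw [Finset.sum_ite_eq' (Finset.range (ν v + 1)) k₀ (fun k => T^k)]
            rw [if_pos hk₀r]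
            have hk₀1 : 1 ≤ k₀ := by
              rcases Nat.eq_zero_or_pos k₀ with rfl | h
              · exfalso
                simp only [Nat.cast_zero, zero_mul, sub_zero] at hk₀
                exact hb hk₀
              · exact h
            calc T^k₀ ≤ T^1 := pow_le_pow_of_le_one hTn hT1.le hk₀1
              _ = T := pow_one T
          · push_neg at hnone
            rw [Finset.sum_eq_zero]
            · exact hTn
            · intro k hk
              rw [if_neg (hnone k hk)]
        linarith [hsum1, hsum2]
      -- key algebraic identity
      have hkey : (1-T)⁻¹ * phi T s' + T = phi T (s'+1) * ((1 - 2*T) * (1-T)⁻¹) := by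
        have h := phi_succ_key (T := T) hT2 s'
        have h1Tne : (1-T) ≠ 0 := ne_of_gt h1T
        field_simp
        nlinarith [h]
      have hmid : (1 - 2*T) * (1-T)⁻¹ ≤ 1 - phi T s' * (T * (1-T)⁻¹) := by
        have hinv1 : (1-T) * (1-T)⁻¹ = 1 := mul_inv_cancel₀ (ne_of_gt h1T)
        nlinarith [mul_nonneg (mul_nonneg hTn (sub_nonneg.mpr hphis')) hinv0]
      calc ‖(F a ν w V b)‖ ≤ ((1-T)⁻¹ * phi T s' + T) * L := hup
        _ = phi T (s'+1) * ((1 - 2*T) * (1-T)⁻¹) * L := by rw [hkey]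
        _ ≤ phi T (s'+1) * ((1 - phi T s' * (T * (1-T)⁻¹)) * L) := by
            have h5 : (1 - 2*T) * (1-T)⁻¹ * L ≤ (1 - phi T s' * (T * (1-T)⁻¹)) * L :=
              mul_le_mul_of_nonneg_right hmid hL0
            nlinarith [h5]
        _ ≤ phi T (s'+1) * ‖(F a ν w V (fun _ => 0))‖ :=
            mul_le_mul_of_nonneg_left hlow' hphis10
        _ = phi T ((V.filter fun j => a i₁ j ≠ 0).card)
              * ‖(F a ν w V (fun _ => 0))‖ := by rw [hs1]

end MainInduction


end Stmt0Proof

/-- **Theorem 1.2.** Let `A = (a_{ij})` be an `m × n` integer matrix whose rows have at most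
`r ≥ 2` non-zero entries and whose columns have at most `c ≥ 1` non-zero entries, let
`ν_1, …, ν_n` be positive integers, and let
`X = {ξ ∈ ℤ₊ⁿ : ∑_j a_{ij} ξ_j = 0 for all i, 0 ≤ ξ_j ≤ ν_j}` (here encoded as tuples
`ξ` with `ξ_j ∈ {0, …, ν_j}`).  If `|w_j| ≤ 0.46/(r√c)` for all `j`, then
`w(X) = ∑_{ξ ∈ X} w_1^{ξ_1} ⋯ w_n^{ξ_n} ≠ 0`. -/
theorem stmt0 (m n : ℕ) (a : Fin m → Fin n → ℤ) (ν : Fin n → ℕ) (hν : ∀ j, 0 < ν j)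
    (r c : ℕ) (hr : 2 ≤ r) (hc : 1 ≤ c)
    (hrow : ∀ i, (Finset.univ.filter fun j => a i j ≠ 0).card ≤ r)
    (hcol : ∀ j, (Finset.univ.filter fun i => a i j ≠ 0).card ≤ c)
    (w : Fin n → ℂ) (hw : ∀ j, ‖w j‖ ≤ 0.46 / (r * Real.sqrt c)) :
    (∑ ξ ∈ Finset.univ.filter
        (fun ξ : (j : Fin n) → Fin (ν j + 1) => ∀ i, ∑ j, a i j * ((ξ j : ℕ) : ℤ) = 0),
      ∏ j, w j ^ (ξ j : ℕ)) ≠ 0 := by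
  classical
  have hr0 : (0:ℝ) < r := by
    have : (2:ℝ) ≤ r := by exact_mod_cast hr
    linarith
  have hT0 : (0:ℝ) < 0.46 / r := by positivity
  have hr2 : (2:ℝ) ≤ r := by exact_mod_cast hr
  have hT2 : 2 * (0.46 / (r:ℝ)) < 1 := by
    rw [mul_div_assoc', div_lt_one hr0]
    nlinarith
  have hsq : (1:ℝ) ≤ Real.sqrt c := by
    rw [show (1:ℝ) = Real.sqrt 1 from (Real.sqrt_one).symm]
    apply Real.sqrt_le_sqrt
    exact_mod_cast hc
  have hwT : ∀ j, ‖(w j)‖ ≤ 0.46 / r := by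
    intro j
    refine le_trans (hw j) ?_
    apply div_le_div_of_nonneg_left (by norm_num) hr0
    nlinarith
  have hmain := (Stmt0Proof.main_ind (ν := ν) r hT0 hT2 (Stmt0Proof.num_main r hr) hrow hwT
    (Finset.univ : Finset (Fin n))).1
  have hEq : Stmt0Proof.F a ν w Finset.univ (fun _ => 0)
      = (∑ ξ ∈ Finset.univ.filter
        (fun ξ : (j : Fin n) → Fin (ν j + 1) => ∀ i, ∑ j, a i j * ((ξ j : ℕ) : ℤ) = 0),
      ∏ j, w j ^ (ξ j : ℕ)) := by
    rw [Stmt0Proof.F]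
    apply Finset.sum_congr
    · ext ξ
      simp only [Finset.mem_filter, Finset.mem_univ, true_and]
      constructor
      · rintro ⟨h1, _⟩; exact h1
      · intro h1
        refine ⟨h1, ?_⟩
        intro j hj
        exact absurd trivial hj
    · intro ξ _
      rfl
  rw [← hEq]
  exact hmain
end

section
/- Let (Ω, 𝒫) be a probability space, let f: Ω → ℂ be a random variable with E|f| < +∞, and let 0 ≤ θ < 2π/3 be a real number such that f(ω) ≠ 0 for all ω ∈ Ω and the angle between f(ω_1) and f(ω_2) does not exceed θ for all ω_1, ω_2 ∈ Ω. Then |E f| ≥ cos(θ/2) · E|f|. -/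
open MeasureTheory

/-- The angle between two complex numbers, regarded as vectors in `ℝ² = ℂ`. -/
noncomputable def cangle (u v : ℂ) : ℝ :=
  Real.arccos ((u * (starRingEnd ℂ) v).re / (‖u‖ * ‖v‖))

theorem cangle_eq_abs_arg_div (u v : ℂ) (hu : u ≠ 0) (hv : v ≠ 0) :
    cangle u v = |Complex.arg (u / v)| := by
  unfold cangle
  have h1 : u * (starRingEnd ℂ) v = (Complex.normSq v : ℝ) * (u / v) := by
    rw [← Complex.mul_conj]
    field_simp
  have h2 : Complex.arg (u * (starRingEnd ℂ) v) = Complex.arg (u / v) := by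
    rw [h1, Complex.arg_real_mul _ (Complex.normSq_pos.2 hv)]
  have hw : u * (starRingEnd ℂ) v ≠ 0 := mul_ne_zero hu (by simpa using hv)
  have h3 : (u * (starRingEnd ℂ) v).re / (‖u‖ * ‖v‖)
      = Real.cos (Complex.arg (u / v)) := by
    rw [← h2, Complex.cos_arg hw, norm_mul, Complex.norm_conj]
  rw [h3, ← Real.cos_abs, Real.arccos_cos (abs_nonneg _)
    (abs_le.2 ⟨(Complex.neg_pi_lt_arg _).le, Complex.arg_le_pi _⟩)]

/-- **Lemma 3.4.** Let `f` be an integrable complex random variable on a probability space,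
nowhere zero, such that the angle between any two of its values is at most `θ` for some
`0 ≤ θ < 2π/3`.  Then `|E f| ≥ cos(θ/2) ⬝ E |f|`. -/
theorem stmt4 {Ω : Type*} [MeasurableSpace Ω] (P : Measure Ω) [IsProbabilityMeasure P]
    (f : Ω → ℂ) (hf : Integrable f P)
    (θ : ℝ) (hθ0 : 0 ≤ θ) (hθ1 : θ < 2 * Real.pi / 3)
    (hne : ∀ ω, f ω ≠ 0)
    (hang : ∀ ω₁ ω₂, cangle (f ω₁) (f ω₂) ≤ θ) :
    Real.cos (θ / 2) * (∫ ω, ‖f ω‖ ∂P) ≤ ‖∫ ω, f ω ∂P‖ := by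
  have hπ := Real.pi_pos
  have hΩ : Nonempty Ω := by
    by_contra h
    rw [not_nonempty_iff] at h
    have h1 : P Set.univ = 1 := measure_univ
    rw [Set.univ_eq_empty_iff.2 h, measure_empty] at h1
    simp at h1
  obtain ⟨ω₀⟩ := hΩ
  set x : Ω → ℝ := fun ω => Complex.arg (f ω / f ω₀) with hxdef
  have hx_abs : ∀ ω, |x ω| ≤ θ := by
    intro ω
    rw [hxdef, ← cangle_eq_abs_arg_div _ _ (hne ω) (hne ω₀)]
    exact hang ω ω₀
  -- pairwise bound
  have hpair : ∀ ω₁ ω₂, |x ω₁ - x ω₂| ≤ θ := by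
    intro ω₁ ω₂
    have hcoe : ((x ω₁ - x ω₂ : ℝ) : Real.Angle)
        = ((Complex.arg (f ω₁ / f ω₂) : ℝ) : Real.Angle) := by
      rw [Real.Angle.coe_sub, hxdef]
      simp only
      rw [Complex.arg_div_coe_angle (hne ω₁) (hne ω₀),
        Complex.arg_div_coe_angle (hne ω₂) (hne ω₀),
        Complex.arg_div_coe_angle (hne ω₁) (hne ω₂)]
      abel
    obtain ⟨k, hk⟩ := Real.Angle.angle_eq_iff_two_pi_dvd_sub.1 hcoe
    have harg : |Complex.arg (f ω₁ / f ω₂)| ≤ θ := by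
      rw [← cangle_eq_abs_arg_div _ _ (hne ω₁) (hne ω₂)]
      exact hang ω₁ ω₂
    have hk0 : k = 0 := by
      by_contra hk0
      have h1 : (1 : ℝ) ≤ |(k : ℝ)| := by
        rw [← Int.cast_abs]
        exact_mod_cast Int.one_le_abs hk0
      have h2 : |x ω₁ - x ω₂ - Complex.arg (f ω₁ / f ω₂)| = 2 * Real.pi * |(k:ℝ)| := by
        rw [hk, abs_mul, abs_of_pos (by linarith : (0:ℝ) < 2 * Real.pi)]
      have h3 := abs_sub (x ω₁ - x ω₂) (Complex.arg (f ω₁ / f ω₂))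
      have h4 := abs_sub (x ω₁) (x ω₂)
      have h5 := hx_abs ω₁
      have h6 := hx_abs ω₂
      nlinarith [abs_nonneg ((k:ℝ))]
    rw [hk0] at hk
    simp at hk
    calc |x ω₁ - x ω₂| = |Complex.arg (f ω₁ / f ω₂)| := by rw [sub_eq_iff_eq_add.1 hk]; ring_nf
    _ ≤ θ := harg
  -- sup and inf
  have hbddA : BddAbove (Set.range x) := ⟨θ, by rintro _ ⟨ω, rfl⟩; exact (abs_le.1 (hx_abs ω)).2⟩
  have hbddB : BddBelow (Set.range x) := ⟨-θ, by rintro _ ⟨ω, rfl⟩; exact (abs_le.1 (hx_abs ω)).1⟩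
  have hrne : (Set.range x).Nonempty := ⟨x ω₀, ⟨ω₀, rfl⟩⟩
  set M := sSup (Set.range x)
  set m := sInf (Set.range x)
  have hle : ∀ ω, x ω ≤ M := fun ω => le_csSup hbddA ⟨ω, rfl⟩
  have hge : ∀ ω, m ≤ x ω := fun ω => csInf_le hbddB ⟨ω, rfl⟩
  have hMm : M - m ≤ θ := by
    have : M ≤ m + θ := by
      apply csSup_le hrne
      rintro _ ⟨ω₁, rfl⟩
      have : x ω₁ - θ ≤ m := by
        apply le_csInf hrne
        rintro _ ⟨ω₂, rfl⟩
        linarith [(abs_le.1 (hpair ω₁ ω₂)).2]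
      linarith
    linarith
  set c := (M + m) / 2 with hc
  have hxc : ∀ ω, |x ω - c| ≤ θ / 2 := by
    intro ω
    rw [abs_le]
    constructor <;> [linarith [hge ω]; linarith [hle ω]]
  set a := Complex.arg (f ω₀) with ha
  set e : ℂ := Complex.exp ((-(a + c) : ℝ) * Complex.I) with he
  have habs_e : ‖e‖ = 1 := by
    rw [he, Complex.norm_exp]
    simp
  -- pointwise bound
  have hpt : ∀ ω, Real.cos (θ / 2) * ‖f ω‖ ≤ (e * f ω).re := by
    intro ω
    have hfω : f ω = (‖f ω‖ : ℝ) * Complex.exp (Complex.arg (f ω) * Complex.I) :=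
      (Complex.norm_mul_exp_arg_mul_I (f ω)).symm
    have hmul : e * f ω = (‖f ω‖ : ℝ) *
        Complex.exp (((Complex.arg (f ω) - (a + c) : ℝ)) * Complex.I) := by
      rw [he]
      conv_lhs => rw [hfω]
      rw [mul_left_comm, ← Complex.exp_add]
      congr 2
      push_cast
      ring
    have hre : (e * f ω).re = ‖f ω‖ * Real.cos (Complex.arg (f ω) - (a + c)) := by
      rw [hmul, Complex.re_ofReal_mul, Complex.exp_ofReal_mul_I_re]
    have hangle : ((Complex.arg (f ω) - (a + c) : ℝ) : Real.Angle) = ((x ω - c : ℝ) : Real.Angle) := by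
      rw [Real.Angle.coe_sub, Real.Angle.coe_sub, Real.Angle.coe_add, hxdef]
      simp only
      rw [Complex.arg_div_coe_angle (hne ω) (hne ω₀), ← ha]
      abel
    have hcos_eq : Real.cos (Complex.arg (f ω) - (a + c)) = Real.cos (x ω - c) := by
      rw [← Real.Angle.cos_coe, hangle, Real.Angle.cos_coe]
    have hcos_ge : Real.cos (θ / 2) ≤ Real.cos (x ω - c) := by
      rw [← Real.cos_abs (x ω - c)]
      apply Real.cos_le_cos_of_nonneg_of_le_pi (abs_nonneg _) (by linarith) (hxc ω)
    rw [hre, hcos_eq, mul_comm]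
    exact mul_le_mul_of_nonneg_left hcos_ge (norm_nonneg _)
  -- integrate
  have hint1 : Integrable (fun ω => (e * f ω).re) P := (hf.const_mul e).re
  have hint2 : Integrable (fun ω => Real.cos (θ / 2) * ‖f ω‖) P := by
    simpa using hf.norm.const_mul (Real.cos (θ / 2))
  have hmono : ∫ ω, Real.cos (θ / 2) * ‖f ω‖ ∂P ≤ ∫ ω, (e * f ω).re ∂P :=
    integral_mono hint2 hint1 hpt
  have heq1 : ∫ ω, Real.cos (θ / 2) * ‖f ω‖ ∂P
      = Real.cos (θ / 2) * ∫ ω, ‖f ω‖ ∂P := integral_const_mul _ _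
  have heq2 : ∫ ω, (e * f ω).re ∂P = (e * ∫ ω, f ω ∂P).re := by
    rw [← integral_const_mul e f]
    exact integral_re (hf.const_mul e)
  have hfin : (e * ∫ ω, f ω ∂P).re ≤ ‖∫ ω, f ω ∂P‖ := by
    calc (e * ∫ ω, f ω ∂P).re ≤ ‖e * ∫ ω, f ω ∂P‖ := Complex.re_le_norm _
    _ = ‖∫ ω, f ω ∂P‖ := by rw [norm_mul, habs_e, one_mul]
  linarith [heq1 ▸ hmono, heq2 ▸ hfin]
end

section
/- Let Z ⊂ ℂ be a set of non-zero complex numbers and let 0 ≤ θ < 2π/3 be such that the angle between any two elements of Z is at most θ. Then 0 does not belong to the convex hull of Z (where Z is regarded as a subset of ℝ² = ℂ). -/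
lemma cangle_eq_abs_arg (u v : ℂ) (hu : u ≠ 0) (hv : v ≠ 0) :
    cangle u v = |(u / v).arg| := by
  have huv : u / v ≠ 0 := div_ne_zero hu hv
  have h1 : u * (starRingEnd ℂ) v = (u / v) * (Complex.normSq v : ℂ) := by
    rw [← Complex.mul_conj]; field_simp
  have h2 : ‖u‖ * ‖v‖ = ‖u / v‖ * Complex.normSq v := by
    have hb : ‖v‖ ≠ 0 := (norm_pos_iff.mpr hv).ne'
    rw [norm_div, Complex.normSq_eq_norm_sq]
    field_simp [sq]
  have h3 : (u * (starRingEnd ℂ) v).re / (‖u‖ * ‖v‖)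
      = (u / v).re / ‖u / v‖ := by
    rw [h1, h2]
    have hns : (0:ℝ) < Complex.normSq v := Complex.normSq_pos.2 hv
    rw [Complex.mul_re]
    simp [mul_div_mul_right _ _ hns.ne']
  rw [cangle, h3, ← Complex.cos_arg huv]
  rcases le_or_gt 0 (u / v).arg with h | h
  · rw [Real.arccos_cos h (Complex.arg_le_pi _), abs_of_nonneg h]
  · rw [← Real.cos_neg, Real.arccos_cos (by linarith) (by linarith [Complex.neg_pi_lt_arg (u/v)]),
      abs_of_neg h]

lemma re_mul_conj_aux (z₀ : ℂ) (r α φ : ℝ) :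
    ((z₀ * ((r : ℂ) * Complex.exp (α * Complex.I))) *
      (starRingEnd ℂ) (z₀ * Complex.exp (φ * Complex.I))).re
      = Complex.normSq z₀ * r * Real.cos (α - φ) := by
  have e1 : Complex.exp (↑α * Complex.I) * Complex.exp (-(↑φ * Complex.I))
      = Complex.exp (↑(α - φ) * Complex.I) := by
    rw [← Complex.exp_add]; congr 1; push_cast; ring
  have hc : (starRingEnd ℂ) (Complex.exp (↑φ * Complex.I)) = Complex.exp (-(↑φ * Complex.I)) := by
    rw [← Complex.exp_conj]; congr 1; simp [Complex.conj_ofReal]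
  have e2 : (z₀ * ((r : ℂ) * Complex.exp (↑α * Complex.I))) *
      (starRingEnd ℂ) (z₀ * Complex.exp (↑φ * Complex.I))
      = ((Complex.normSq z₀ * r : ℝ) : ℂ) * Complex.exp (↑(α - φ) * Complex.I) := by
    rw [map_mul, hc,
      show z₀ * ((r : ℂ) * Complex.exp (↑α * Complex.I)) *
          ((starRingEnd ℂ) z₀ * Complex.exp (-(↑φ * Complex.I)))
        = (z₀ * (starRingEnd ℂ) z₀) * (r : ℂ) *
          (Complex.exp (↑α * Complex.I) * Complex.exp (-(↑φ * Complex.I))) from by ring,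
      Complex.mul_conj, e1]
    push_cast; ring
  rw [e2, Complex.re_ofReal_mul, Complex.exp_ofReal_mul_I_re]

/-- If `Z ⊂ ℂ` is a set of non-zero complex numbers such that the angle between any two
elements of `Z` is at most `θ` for some `0 ≤ θ < 2π/3`, then `0` does not lie in the
convex hull of `Z` (regarded as a subset of `ℝ² = ℂ`). -/
theorem stmt5 (Z : Set ℂ) (hZ : ∀ z ∈ Z, z ≠ 0)
    (θ : ℝ) (hθ0 : 0 ≤ θ) (hθ1 : θ < 2 * Real.pi / 3)
    (hang : ∀ u ∈ Z, ∀ v ∈ Z, cangle u v ≤ θ) :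
    (0 : ℂ) ∉ convexHull ℝ Z := by
  intro h0
  have hpi : (0:ℝ) < Real.pi := Real.pi_pos
  -- Z is nonempty
  obtain ⟨z₀, hz₀⟩ : Z.Nonempty := by
    by_contra h
    rw [Set.not_nonempty_iff_eq_empty] at h
    simp [h] at h0
  have hz₀0 := hZ z₀ hz₀
  -- pairwise arg bound
  have hpair : ∀ u ∈ Z, ∀ v ∈ Z, |(u / v).arg| ≤ θ := fun u hu v hv => by
    rw [← cangle_eq_abs_arg u v (hZ u hu) (hZ v hv)]; exact hang u hu v hv
  set a : ℂ → ℝ := fun z => (z / z₀).arg with ha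
  have haθ : ∀ z ∈ Z, |a z| ≤ θ := fun z hz => hpair z hz z₀ hz₀
  -- difference of relative args is bounded by θ
  have hdiff : ∀ u ∈ Z, ∀ v ∈ Z, |a u - a v| ≤ θ := by
    intro u hu v hv
    have hu0 := hZ u hu
    have hv0 := hZ v hv
    have huz : u / z₀ ≠ 0 := div_ne_zero hu0 hz₀0
    have hvz : v / z₀ ≠ 0 := div_ne_zero hv0 hz₀0
    have hq : u / v = (u / z₀) / (v / z₀) := by field_simp
    have hagl : ((u / v).arg : Real.Angle) = ((a u - a v : ℝ) : Real.Angle) := by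
      rw [hq, Complex.arg_div_coe_angle huz hvz, Real.Angle.coe_sub]
    obtain ⟨k, hk⟩ := Real.Angle.angle_eq_iff_two_pi_dvd_sub.1 hagl
    have h1 : |(u / v).arg| ≤ θ := hpair u hu v hv
    have h2 : |a u| ≤ θ := haθ u hu
    have h3 : |a v| ≤ θ := haθ v hv
    have hk0 : k = 0 := by
      by_contra hk0
      have : (1:ℝ) ≤ |(k:ℝ)| := by
        exact_mod_cast Int.one_le_abs (by exact_mod_cast hk0)
      have habs : |(u / v).arg - (a u - a v)| = 2 * Real.pi * |(k:ℝ)| := by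
        rw [hk, abs_mul, abs_of_pos (by linarith : (0:ℝ) < 2 * Real.pi)]
      have : |(u / v).arg - (a u - a v)| ≤ 3 * θ := by
        have := abs_sub_abs_le_abs_sub (u/v).arg (a u - a v)
        have h4 : |a u - a v| ≤ 2 * θ := by
          calc |a u - a v| ≤ |a u| + |a v| := abs_sub _ _
            _ ≤ 2 * θ := by linarith
        calc |(u / v).arg - (a u - a v)| ≤ |(u/v).arg| + |a u - a v| := abs_sub _ _
          _ ≤ 3 * θ := by linarith
      nlinarith [abs_nonneg ((k:ℝ))]
    have heq : (u / v).arg = a u - a v := by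
      rw [hk0] at hk; push_cast at hk; linarith
    rw [← heq]; exact h1
  -- infimum of relative args
  set A : Set ℝ := a '' Z with hA
  have hAne : A.Nonempty := ⟨a z₀, z₀, hz₀, rfl⟩
  have hAbdd : BddBelow A := ⟨-θ, by rintro x ⟨z, hz, rfl⟩; linarith [abs_le.1 (haθ z hz)|>.1]⟩
  set m : ℝ := sInf A with hm
  have hml : ∀ z ∈ Z, m ≤ a z := fun z hz => csInf_le hAbdd ⟨z, hz, rfl⟩
  have hmu : ∀ z ∈ Z, a z ≤ m + θ := by
    intro z hz
    have : a z - θ ≤ m := le_csInf hAne (by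
      rintro x ⟨v, hv, rfl⟩
      have := abs_le.1 (hdiff z hz v hv) |>.2
      linarith)
    linarith
  set φ : ℝ := m + θ / 2 with hφ
  have hclose : ∀ z ∈ Z, |a z - φ| ≤ θ / 2 := by
    intro z hz
    rw [abs_le]
    constructor <;> [linarith [hml z hz]; linarith [hmu z hz]]
  -- the separating direction
  set w : ℂ := z₀ * Complex.exp (φ * Complex.I) with hw
  set f : ℂ → ℝ := fun x => (x * (starRingEnd ℂ) w).re with hf
  have hlin : IsLinearMap ℝ f := by
    constructor
    · intro x y; simp [hf, add_mul]; ring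
    · intro c x; simp [hf, Complex.smul_re]; ring
  have hconv : Convex ℝ {x : ℂ | 0 < f x} := convex_halfSpace_gt hlin 0
  have hZS : Z ⊆ {x : ℂ | 0 < f x} := by
    intro z hz
    have hz0 := hZ z hz
    have hr : (0:ℝ) < ‖z / z₀‖ := by
      simp [norm_div, norm_pos_iff.mpr hz0, norm_pos_iff.mpr hz₀0, div_pos, hz0, hz₀0]
    have hzeq : z = z₀ * ((‖z / z₀‖ : ℂ) * Complex.exp (a z * Complex.I)) := by
      rw [ha, Complex.norm_mul_exp_arg_mul_I]
      field_simp
    have hfz : f z = Complex.normSq z₀ * ‖z / z₀‖ * Real.cos (a z - φ) := by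
      show (z * (starRingEnd ℂ) w).re = _
      conv_lhs => rw [hzeq, hw]
      exact re_mul_conj_aux z₀ (‖z / z₀‖) (a z) φ
    have hcos : (0:ℝ) < Real.cos (a z - φ) := by
      apply Real.cos_pos_of_mem_Ioo
      have := abs_le.1 (hclose z hz)
      constructor <;> [nlinarith [this.1]; nlinarith [this.2]]
    rw [Set.mem_setOf_eq, hfz]
    exact mul_pos (mul_pos (Complex.normSq_pos.2 hz₀0) hr) hcos
  have h0S : (0:ℂ) ∈ {x : ℂ | 0 < f x} := (convexHull_min hZS hconv) h0
  simp [hf] at h0S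
end

section
/- Let G_1 = (V_1, E_1) be a connected undirected graph without loops or multiple edges whose edges are given an arbitrary orientation, let G_2 = (V_2, E_2) be a connected undirected graph without multiple edges but possibly with loops, V_2 = {1,…,n}, and fix a vertex a ∈ V_1. Consider 0-1 variables x^{uv}_{ij} indexed by directed edges (u,v) ∈ E_1 and ordered pairs 1 ≤ i,j ≤ n with {i,j} ∈ E_2 (possibly i = j). For neighbors u, v in G_1 and i ∈ V_2, set S^{u,v}_i = ∑_{j: {i,j} ∈ E_2} x^{uv}_{ij} if (u,v) ∈ E_1, and S^{u,v}_i = ∑_{j: {i,j} ∈ E_2} x^{vu}_{ji} if (v,u) ∈ E_1. Consider the system: (i) for every u ∈ V_1 and every i ∈ V_2, the sums S^{u,v}_i are equal for all neighbors v of u; (ii) for every neighbor v of a, S^{a,v}_n = 1 and S^{a,v}_j = 0 for all j ≠ n. Then the assignment x^{uv}_{ij} = 1 if φ(u) = i and φ(v) = j, and x^{uv}_{ij} = 0 otherwise, defines a bijection between the set of graph homomorphisms φ: G_1 → G_2 with φ(a) = n and the set of 0-1 solutions of this system. -/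
open Classical in
/-- The sum `S^{u,v}_i` of (2.2.2): for neighbours `u, v` of `G₁`, if the edge is oriented
as `(u,v)` then `S^{u,v}_i = ∑_{j : {i,j} ∈ E₂} x^{uv}_{ij}`, and if it is oriented as
`(v,u)` then `S^{u,v}_i = ∑_{j : {i,j} ∈ E₂} x^{vu}_{ji}`.  Here `o u v` means the edge
`{u,v}` is oriented as `(u,v)`. -/
noncomputable def Ssum {V₁ : Type*} (n : ℕ) (E₂ : Fin n → Fin n → Prop)
    (o : V₁ → V₁ → Prop) (x : V₁ → V₁ → Fin n → Fin n → ℕ) (u v : V₁) (i : Fin n) : ℕ :=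
  if o u v then ∑ j ∈ Finset.univ.filter (fun j => E₂ i j), x u v i j
  else ∑ j ∈ Finset.univ.filter (fun j => E₂ i j), x v u j i

lemma sum_eq_one_aux {α : Type*} [Fintype α] (f : α → ℕ) (h : ∑ i, f i = 1) :
    ∃ i, f i = 1 ∧ ∀ j, j ≠ i → f j = 0 := by
  classical
  obtain ⟨i, -, hi⟩ := Finset.exists_ne_zero_of_sum_ne_zero
    (s := (Finset.univ : Finset α)) (f := f) (by rw [h]; exact one_ne_zero)
  have hle : f i ≤ 1 := h ▸ Finset.single_le_sum (f := f)
    (fun i _ => Nat.zero_le _) (Finset.mem_univ i)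
  refine ⟨i, by omega, fun j hj => ?_⟩
  have hsub : ({i, j} : Finset α) ⊆ Finset.univ := Finset.subset_univ _
  have h2 := Finset.sum_le_sum_of_subset (f := f) hsub
  rw [h, Finset.sum_pair (Ne.symm hj)] at h2
  omega

open Classical in
/-- Section 2.2: encoding graph homomorphisms by 0-1 solutions of the linear system
(2.2.3)–(2.2.4).  `G₁` is a connected simple graph with an orientation `o` of its edges,
`G₂` is a connected undirected graph on `{1, …, n}` (possibly with loops), given by a
symmetric relation `E₂` on `Fin n`.  The 0-1 variables `x^{uv}_{ij}` are indexed by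
directed edges `(u,v)` of `G₁` and pairs `(i,j)` with `{i,j} ∈ E₂` (encoded as functions
vanishing outside those indices).  The assignment `x^{uv}_{ij} = 1` iff `φ u = i` and
`φ v = j` is a bijection between homomorphisms `φ : G₁ → G₂` with `φ a = i₀` and 0-1
solutions of the system: for each `u` and `i`, all sums `S^{u,v}_i` over neighbours `v`
of `u` coincide, and for all neighbours `v` of `a`, `S^{a,v}_{i₀} = 1` and `S^{a,v}_j = 0`
for `j ≠ i₀`. -/
theorem stmt12 {V₁ : Type*} (G₁ : SimpleGraph V₁) (hG₁ : G₁.Connected)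
    (n : ℕ) (E₂ : Fin n → Fin n → Prop) (hE₂ : Symmetric E₂)
    (hG₂ : (SimpleGraph.fromRel E₂).Connected)
    (o : V₁ → V₁ → Prop) (ho : ∀ u v, o u v → G₁.Adj u v)
    (ho' : ∀ u v, G₁.Adj u v → (o u v ↔ ¬ o v u))
    (a : V₁) (i₀ : Fin n) :
    Set.BijOn
      (fun (φ : V₁ → Fin n) (u v : V₁) (i j : Fin n) =>
        if o u v ∧ φ u = i ∧ φ v = j then 1 else 0)
      {φ : V₁ → Fin n | (∀ u v, G₁.Adj u v → E₂ (φ u) (φ v)) ∧ φ a = i₀}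
      {x : V₁ → V₁ → Fin n → Fin n → ℕ |
        (∀ u v i j, x u v i j ≤ 1) ∧
        (∀ u v i j, x u v i j ≠ 0 → o u v ∧ E₂ i j) ∧
        (∀ u v w, G₁.Adj u v → G₁.Adj u w →
          ∀ i, Ssum n E₂ o x u v i = Ssum n E₂ o x u w i) ∧
        (∀ v, G₁.Adj a v → Ssum n E₂ o x a v i₀ = 1 ∧
          ∀ j, j ≠ i₀ → Ssum n E₂ o x a v j = 0)} := by
  classical
  have hSsum : ∀ (x : V₁ → V₁ → Fin n → Fin n → ℕ),
      (∀ u v i j, x u v i j ≠ 0 → o u v ∧ E₂ i j) →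
      ∀ u v i, Ssum n E₂ o x u v i =
        if o u v then ∑ j, x u v i j else ∑ j, x v u j i := by
    intro x hx u v i
    unfold Ssum
    split
    · exact Finset.sum_subset (Finset.filter_subset _ _) (fun j _ hj => by
        by_contra h0
        exact hj (Finset.mem_filter.2 ⟨Finset.mem_univ _, (hx u v i j h0).2⟩))
    · exact Finset.sum_subset (Finset.filter_subset _ _) (fun j _ hj => by
        by_contra h0
        exact hj (Finset.mem_filter.2 ⟨Finset.mem_univ _, hE₂ (hx v u j i h0).2⟩))
  have hnbr : ∀ u : V₁, u ≠ a → ∃ v, G₁.Adj u v := by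
    intro u hu
    obtain ⟨p⟩ := hG₁.preconnected u a
    cases p with
    | nil => exact absurd rfl hu
    | cons h _ => exact ⟨_, h⟩
  have horient : ∀ u v, G₁.Adj u v → o u v ∨ o v u := by
    intro u v huv
    by_cases h : o u v
    · exact Or.inl h
    · exact Or.inr (by by_contra h'; exact h ((ho' u v huv).mpr h'))
  refine ⟨?_, ?_, ?_⟩
  · -- MapsTo
    rintro φ ⟨hφ, hφa⟩
    simp only [Set.mem_setOf_eq]
    have h2F : ∀ u v i j,
        (if o u v ∧ φ u = i ∧ φ v = j then 1 else 0 : ℕ) ≠ 0 → o u v ∧ E₂ i j := by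
      intro u v i j h0
      by_cases hc : o u v ∧ φ u = i ∧ φ v = j
      · exact ⟨hc.1, hc.2.1 ▸ hc.2.2 ▸ hφ u v (ho u v hc.1)⟩
      · simp [hc] at h0
    have himg : ∀ u v i, G₁.Adj u v →
        Ssum n E₂ o (fun u v i j => if o u v ∧ φ u = i ∧ φ v = j then 1 else 0) u v i
          = if φ u = i then 1 else 0 := by
      intro u v i huv
      rw [hSsum _ h2F]
      by_cases houv : o u v
      · rw [if_pos houv]
        by_cases hi : φ u = i
        · simp [houv, hi]
        · simp [houv, hi]
      · have hovu : o v u := (horient u v huv).resolve_left houv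
        rw [if_neg houv]
        by_cases hi : φ u = i
        · simp [hovu, hi]
        · simp [hovu, hi]
    refine ⟨fun u v i j => by split <;> omega, h2F,
      fun u v w huv huw i => ?_, fun v hav => ⟨?_, fun j hj => ?_⟩⟩
    · rw [himg u v i huv, himg u w i huw]
    · rw [himg a v i₀ hav, if_pos hφa]
    · rw [himg a v j hav, if_neg (by rw [hφa]; exact fun h => hj h.symm)]
  · -- InjOn
    rintro φ ⟨hφ, hφa⟩ ψ ⟨hψ, hψa⟩ heq
    funext u
    by_cases hu : u = a
    · subst hu; rw [hφa, hψa]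
    · obtain ⟨v, hv⟩ := hnbr u hu
      rcases horient u v hv with h | h
      · have h1 : (if o u v ∧ φ u = φ u ∧ φ v = φ v then 1 else 0 : ℕ)
            = if o u v ∧ ψ u = φ u ∧ ψ v = φ v then 1 else 0 :=
          congrFun (congrFun (congrFun (congrFun heq u) v) (φ u)) (φ v)
        rw [if_pos ⟨h, rfl, rfl⟩] at h1
        by_cases hc : o u v ∧ ψ u = φ u ∧ ψ v = φ v
        · exact hc.2.1.symm
        · rw [if_neg hc] at h1; exact absurd h1 one_ne_zero
      · have h1 : (if o v u ∧ φ v = φ v ∧ φ u = φ u then 1 else 0 : ℕ)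
            = if o v u ∧ ψ v = φ v ∧ ψ u = φ u then 1 else 0 :=
          congrFun (congrFun (congrFun (congrFun heq v) u) (φ v)) (φ u)
        rw [if_pos ⟨h, rfl, rfl⟩] at h1
        by_cases hc : o v u ∧ ψ v = φ v ∧ ψ u = φ u
        · exact hc.2.2.symm
        · rw [if_neg hc] at h1; exact absurd h1 one_ne_zero
  · -- SurjOn
    rintro x ⟨h1, h2, h3, h4⟩
    have hx := hSsum x h2
    have hTsymm : ∀ u v, G₁.Adj u v →
        ∑ i, Ssum n E₂ o x u v i = ∑ i, Ssum n E₂ o x v u i := by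
      intro u v huv
      rcases horient u v huv with h | h
      · have h' : ¬ o v u := (ho' u v huv).mp h
        simp only [hx, if_pos h, if_neg h']
        exact Finset.sum_comm
      · have h' : ¬ o u v := (ho' v u huv.symm).mp h
        simp only [hx, if_pos h, if_neg h']
        exact Finset.sum_comm
    have hT1 : ∀ u v, G₁.Adj u v → ∑ i, Ssum n E₂ o x u v i = 1 := by
      have hTa : ∀ v, G₁.Adj a v → ∑ i, Ssum n E₂ o x a v i = 1 := by
        intro v hav
        rw [Finset.sum_eq_single i₀ (fun j _ hj => (h4 v hav).2 j hj)
          (fun h => absurd (Finset.mem_univ i₀) h)]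
        exact (h4 v hav).1
      have step : ∀ (b c : V₁) (p : G₁.Walk b c),
          (∀ v, G₁.Adj b v → ∑ i, Ssum n E₂ o x b v i = 1) →
          (∀ v, G₁.Adj c v → ∑ i, Ssum n E₂ o x c v i = 1) := by
        intro b c p
        induction p with
        | nil => exact id
        | @cons b d c h q ih =>
          intro hb
          apply ih
          intro w hw
          calc ∑ i, Ssum n E₂ o x d w i
              = ∑ i, Ssum n E₂ o x d b i :=
                Finset.sum_congr rfl (fun i _ => h3 d w b hw h.symm i)
            _ = ∑ i, Ssum n E₂ o x b d i := (hTsymm b d h).symm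
            _ = 1 := hb d h
      intro u v huv
      exact step a u (hG₁.preconnected a u).some hTa v huv
    have key : ∀ u v, G₁.Adj u v → ∃ i, Ssum n E₂ o x u v i = 1 ∧
        ∀ j, j ≠ i → Ssum n E₂ o x u v j = 0 :=
      fun u v huv => sum_eq_one_aux _ (hT1 u v huv)
    have hφdef : ∀ u, ∃ i : Fin n, (u = a → i = i₀) ∧
        ∀ v, G₁.Adj u v → Ssum n E₂ o x u v i = 1 ∧
          ∀ j, j ≠ i → Ssum n E₂ o x u v j = 0 := by
      intro u
      by_cases hu : ∃ v, G₁.Adj u v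
      · obtain ⟨v₀, hv₀⟩ := hu
        obtain ⟨i, hi1, hi0⟩ := key u v₀ hv₀
        refine ⟨i, ?_, fun v hv =>
          ⟨by rw [h3 u v v₀ hv hv₀]; exact hi1,
           fun j hj => by rw [h3 u v v₀ hv hv₀]; exact hi0 j hj⟩⟩
        intro hua
        subst hua
        by_contra hne
        have h0 := hi0 i₀ (fun h => hne h.symm)
        rw [(h4 v₀ hv₀).1] at h0
        exact one_ne_zero h0
      · exact ⟨i₀, fun _ => rfl, fun v hv => absurd ⟨v, hv⟩ hu⟩
    choose φ hφa' hφ using hφdef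
    have hφa : φ a = i₀ := hφa' a rfl
    have hzero1 : ∀ u v, o u v → ∀ i j, i ≠ φ u → x u v i j = 0 := by
      intro u v houv i j hi
      have huv := ho u v houv
      have h0 : Ssum n E₂ o x u v i = 0 := (hφ u v huv).2 i hi
      rw [hx, if_pos houv] at h0
      exact Finset.sum_eq_zero_iff.mp h0 j (Finset.mem_univ j)
    have hzero2 : ∀ u v, o u v → ∀ i j, j ≠ φ v → x u v i j = 0 := by
      intro u v houv i j hj
      have huv := ho u v houv
      have h' : ¬ o v u := (ho' u v huv).mp houv
      have h0 : Ssum n E₂ o x v u j = 0 := (hφ v u huv.symm).2 j hj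
      rw [hx, if_neg h'] at h0
      exact Finset.sum_eq_zero_iff.mp h0 i (Finset.mem_univ i)
    have hone : ∀ u v, o u v → x u v (φ u) (φ v) = 1 := by
      intro u v houv
      have huv := ho u v houv
      have h1' : Ssum n E₂ o x u v (φ u) = 1 := (hφ u v huv).1
      rw [hx, if_pos houv,
        Finset.sum_eq_single (φ v) (fun j _ hj => hzero2 u v houv (φ u) j hj)
          (fun h => absurd (Finset.mem_univ _) h)] at h1'
      exact h1'
    refine ⟨φ, ⟨?_, hφa⟩, ?_⟩
    · intro u v huv
      rcases horient u v huv with h | h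
      · exact (h2 u v (φ u) (φ v) (by rw [hone u v h]; exact one_ne_zero)).2
      · exact hE₂ (h2 v u (φ v) (φ u) (by rw [hone v u h]; exact one_ne_zero)).2
    · funext u v i j
      dsimp only
      by_cases houv : o u v
      · by_cases hc : φ u = i ∧ φ v = j
        · rw [if_pos ⟨houv, hc⟩, ← hc.1, ← hc.2, hone u v houv]
        · rw [if_neg (fun hcc => hc ⟨hcc.2.1, hcc.2.2⟩)]
          rcases not_and_or.mp hc with hi | hj
          · exact (hzero1 u v houv i j (fun h => hi h.symm)).symm
          · exact (hzero2 u v houv i j (fun h => hj h.symm)).symm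
      · rw [if_neg (fun hcc => houv hcc.1)]
        by_contra h0
        exact houv (h2 u v i j (fun hh => h0 hh.symm)).1
end

section
/- Let B_1 ∈ ℳ be an R_1×C_1 matrix and B_2 ∈ ℳ an R_2×C_2 matrix. Consider the conditions: (1) B_1(i,j) = B_2(i,j) for all i ∈ R_1 ∩ R_2 and all j ∈ C_1 ∩ C_2; (2) B_1(i,j) = 0 for all i ∈ R_1 ∖ R_2 and all j ∈ C_1 ∩ C_2; (3) B_2(i,j) = 0 for all i ∈ R_2 ∖ R_1 and all j ∈ C_1 ∩ C_2. If conditions (1)–(3) are all satisfied, then the connected sum B = B_1 # B_2 is defined and ind(B_1, A)·ind(B_2, A) = ind(B_1 # B_2, A) for all A ∈ ℳ. If any of the conditions (1)–(3) is violated, then ind(B_1, A)·ind(B_2, A) = 0 for all A ∈ ℳ. -/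
/-- The class `ℳ` of integer matrices whose rows and columns are indexed by non-empty
finite subsets `R, C ⊂ ℕ`, with no zero rows and no zero columns.  The entries are
encoded by a total function `ℕ → ℕ → ℤ` vanishing outside `R × C`. -/
structure MMat where
  R : Finset ℕ
  C : Finset ℕ
  hR : R.Nonempty
  hC : C.Nonempty
  entry : ℕ → ℕ → ℤ
  supp : ∀ i j, entry i j ≠ 0 → i ∈ R ∧ j ∈ C
  noZeroRow : ∀ i ∈ R, ∃ j ∈ C, entry i j ≠ 0
  noZeroCol : ∀ j ∈ C, ∃ i ∈ R, entry i j ≠ 0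

namespace MMat

open Classical in
/-- The finite set `X_A` of (5.1.2): vectors `(ξ_j : j ∈ C)` with `0 ≤ ξ_j ≤ ν_j` and
`∑_{j ∈ C} A(i,j) ξ_j = 0` for all `i ∈ R`. -/
noncomputable def solSet (A : MMat) (ν : ℕ → ℕ) : Finset ((j : ℕ) → j ∈ A.C → ℕ) :=
  (A.C.pi fun j => Finset.range (ν j + 1)).filter
    (fun ξ => ∀ i ∈ A.R, ∑ j ∈ A.C.attach, A.entry i j.1 * (ξ j.1 j.2 : ℤ) = 0)

/-- The polynomial `w(X_A; ζ) = ∑_{x ∈ X_A} ∏_{j ∈ C} (ζ w_j)^{ξ_j}` of (5.1.3),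
as a polynomial in `ζ`. -/
noncomputable def wPoly (A : MMat) (w : ℕ → ℂ) (ν : ℕ → ℕ) : Polynomial ℂ :=
  ∑ ξ ∈ A.solSet ν, ∏ j ∈ A.C.attach, (Polynomial.C (w j.1) * Polynomial.X) ^ (ξ j.1 j.2)

/-- The power sums `σ_k(A, w, ν) = ζ_1^{-k} + ⋯ + ζ_d^{-k}` of (5.1.1), where
`ζ_1, …, ζ_d` are the roots of `w(X_A; ζ)`, listed with multiplicity. -/
noncomputable def sigma (A : MMat) (w : ℕ → ℂ) (ν : ℕ → ℕ) (k : ℕ) : ℂ :=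
  ((A.wPoly w ν).roots.map fun ζ => ζ⁻¹ ^ k).sum

/-- The direct sum `A₁ ⊕ A₂` of two matrices in `ℳ` with disjoint row index sets and
disjoint column index sets. -/
def dsum (A₁ A₂ : MMat) (hR : Disjoint A₁.R A₂.R) (hC : Disjoint A₁.C A₂.C) : MMat where
  R := A₁.R ∪ A₂.R
  C := A₁.C ∪ A₂.C
  hR := A₁.hR.mono Finset.subset_union_left
  hC := A₁.hC.mono Finset.subset_union_left
  entry := fun i j => A₁.entry i j + A₂.entry i j
  supp := by
    intro i j h
    by_cases h₁ : A₁.entry i j = 0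
    · have h₂ : A₂.entry i j ≠ 0 := by
        intro h₂; exact h (by simp [h₁, h₂])
      obtain ⟨hi, hj⟩ := A₂.supp i j h₂
      exact ⟨Finset.mem_union_right _ hi, Finset.mem_union_right _ hj⟩
    · obtain ⟨hi, hj⟩ := A₁.supp i j h₁
      exact ⟨Finset.mem_union_left _ hi, Finset.mem_union_left _ hj⟩
  noZeroRow := by
    intro i hi
    rcases Finset.mem_union.mp hi with hi₁ | hi₂
    · obtain ⟨j, hj, hne⟩ := A₁.noZeroRow i hi₁
      refine ⟨j, Finset.mem_union_left _ hj, ?_⟩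
      have h₂ : A₂.entry i j = 0 := by
        by_contra h₂
        exact Finset.disjoint_left.mp hR hi₁ (A₂.supp i j h₂).1
      simpa [h₂] using hne
    · obtain ⟨j, hj, hne⟩ := A₂.noZeroRow i hi₂
      refine ⟨j, Finset.mem_union_right _ hj, ?_⟩
      have h₁ : A₁.entry i j = 0 := by
        by_contra h₁
        exact Finset.disjoint_left.mp hR (A₁.supp i j h₁).1 hi₂
      simpa [h₁] using hne
  noZeroCol := by
    intro j hj
    rcases Finset.mem_union.mp hj with hj₁ | hj₂
    · obtain ⟨i, hi, hne⟩ := A₁.noZeroCol j hj₁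
      refine ⟨i, Finset.mem_union_left _ hi, ?_⟩
      have h₂ : A₂.entry i j = 0 := by
        by_contra h₂
        exact Finset.disjoint_left.mp hR hi (A₂.supp i j h₂).1
      simpa [h₂] using hne
    · obtain ⟨i, hi, hne⟩ := A₂.noZeroCol j hj₂
      refine ⟨i, Finset.mem_union_right _ hi, ?_⟩
      have h₁ : A₁.entry i j = 0 := by
        by_contra h₁
        exact Finset.disjoint_left.mp hR (A₁.supp i j h₁).1 hi
      simpa [h₁] using hne

open Classical in
/-- The index `ind(B, A)` of Section 5.1: `ind(B, A) = 1` if `R₁ ⊆ R`, `C₁ ⊆ C`,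
`A` agrees with `B` on `R₁ × C₁` and `A` vanishes on `(R ∖ R₁) × C₁`; otherwise `0`. -/
noncomputable def ind (B A : MMat) : ℂ :=
  if B.R ⊆ A.R ∧ B.C ⊆ A.C ∧ (∀ i ∈ B.R, ∀ j ∈ B.C, A.entry i j = B.entry i j) ∧
      (∀ i ∈ A.R, i ∉ B.R → ∀ j ∈ B.C, A.entry i j = 0)
    then 1 else 0

open Classical in
/-- The connected sum `B₁ # B₂`: the matrix equal to `B₁` on `R₁ × C₁`, to `B₂` on
`R₂ × C₂`, and zero elsewhere (well-defined when the restrictions of `B₁` and `B₂` to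
`(R₁ ∩ R₂) × (C₁ ∩ C₂)` coincide). -/
noncomputable def csum (B₁ B₂ : MMat) : MMat where
  R := B₁.R ∪ B₂.R
  C := B₁.C ∪ B₂.C
  hR := B₁.hR.mono Finset.subset_union_left
  hC := B₁.hC.mono Finset.subset_union_left
  entry := fun i j => if i ∈ B₁.R ∧ j ∈ B₁.C then B₁.entry i j else B₂.entry i j
  supp := by
    intro i j h
    by_cases h₁ : i ∈ B₁.R ∧ j ∈ B₁.C
    · exact ⟨Finset.mem_union_left _ h₁.1, Finset.mem_union_left _ h₁.2⟩
    · have h' : B₂.entry i j ≠ 0 := by simpa [if_neg h₁] using h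
      obtain ⟨hi, hj⟩ := B₂.supp i j h'
      exact ⟨Finset.mem_union_right _ hi, Finset.mem_union_right _ hj⟩
  noZeroRow := by
    intro i hi
    by_cases hi₁ : i ∈ B₁.R
    · obtain ⟨j, hj, hne⟩ := B₁.noZeroRow i hi₁
      exact ⟨j, Finset.mem_union_left _ hj, by simpa [hi₁, hj] using hne⟩
    · have hi₂ : i ∈ B₂.R := by
        rcases Finset.mem_union.mp hi with h | h
        · exact absurd h hi₁
        · exact h
      obtain ⟨j, hj, hne⟩ := B₂.noZeroRow i hi₂
      exact ⟨j, Finset.mem_union_right _ hj, by simpa [hi₁] using hne⟩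
  noZeroCol := by
    intro j hj
    by_cases hj₁ : j ∈ B₁.C
    · obtain ⟨i, hi, hne⟩ := B₁.noZeroCol j hj₁
      exact ⟨i, Finset.mem_union_left _ hi, by simpa [hi, hj₁] using hne⟩
    · have hj₂ : j ∈ B₂.C := by
        rcases Finset.mem_union.mp hj with h | h
        · exact absurd h hj₁
        · exact h
      obtain ⟨i, hi, hne⟩ := B₂.noZeroCol j hj₂
      exact ⟨i, Finset.mem_union_right _ hi, by simpa [hj₁] using hne⟩

/-- A matrix `B ∈ ℳ` is connected if it cannot be written as a direct sum
`B = B₁ ⊕ B₂` of two matrices in `ℳ`. -/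
def Connected (B : MMat) : Prop :=
  ¬ ∃ (B₁ B₂ : MMat) (h₁ : Disjoint B₁.R B₂.R) (h₂ : Disjoint B₁.C B₂.C),
      B = dsum B₁ B₂ h₁ h₂

end MMat

/-- The indicator condition defining `ind B A = 1`. -/
def MMat.Ok (B A : MMat) : Prop :=
  B.R ⊆ A.R ∧ B.C ⊆ A.C ∧ (∀ i ∈ B.R, ∀ j ∈ B.C, A.entry i j = B.entry i j) ∧
    (∀ i ∈ A.R, i ∉ B.R → ∀ j ∈ B.C, A.entry i j = 0)

open Classical in
lemma MMat.ind_eq (B A : MMat) : MMat.ind B A = if MMat.Ok B A then 1 else 0 := by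
  by_cases h : MMat.Ok B A
  · rw [if_pos h]; unfold MMat.ind; exact if_pos h
  · rw [if_neg h]; unfold MMat.ind; exact if_neg h

lemma MMat.csum_entry (B₁ B₂ : MMat) (i j : ℕ) :
    (MMat.csum B₁ B₂).entry i j =
      if i ∈ B₁.R ∧ j ∈ B₁.C then B₁.entry i j else B₂.entry i j := rfl

lemma MMat.csum_R (B₁ B₂ : MMat) : (MMat.csum B₁ B₂).R = B₁.R ∪ B₂.R := rfl

lemma MMat.csum_C (B₁ B₂ : MMat) : (MMat.csum B₁ B₂).C = B₁.C ∪ B₂.C := rfl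

/-- If both indicators are 1, the compatibility conditions (1)–(3) hold. -/
lemma MMat.both_ok (B₁ B₂ A : MMat) (h₁ : MMat.Ok B₁ A) (h₂ : MMat.Ok B₂ A) :
    (∀ i ∈ B₁.R ∩ B₂.R, ∀ j ∈ B₁.C ∩ B₂.C, B₁.entry i j = B₂.entry i j) ∧
    (∀ i ∈ B₁.R \ B₂.R, ∀ j ∈ B₁.C ∩ B₂.C, B₁.entry i j = 0) ∧
    (∀ i ∈ B₂.R \ B₁.R, ∀ j ∈ B₁.C ∩ B₂.C, B₂.entry i j = 0) := by
  obtain ⟨hR1, hC1, ha1, hv1⟩ := h₁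
  obtain ⟨hR2, hC2, ha2, hv2⟩ := h₂
  refine ⟨?_, ?_, ?_⟩
  · intro i hi j hj
    simp only [Finset.mem_inter] at hi hj
    rw [← ha1 i hi.1 j hj.1, ha2 i hi.2 j hj.2]
  · intro i hi j hj
    simp only [Finset.mem_sdiff] at hi
    simp only [Finset.mem_inter] at hj
    rw [← ha1 i hi.1 j hj.1]
    exact hv2 i (hR1 hi.1) hi.2 j hj.2
  · intro i hi j hj
    simp only [Finset.mem_sdiff] at hi
    simp only [Finset.mem_inter] at hj
    rw [← ha2 i hi.1 j hj.2]
    exact hv1 i (hR2 hi.1) hi.2 j hj.1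

/-- **Lemma 5.2.** Let `B₁, B₂ ∈ ℳ` be `R₁ × C₁` and `R₂ × C₂` matrices.  If the
compatibility conditions (1)–(3) hold, then `B₁ # B₂` is defined and
`ind(B₁, A) ⬝ ind(B₂, A) = ind(B₁ # B₂, A)` for all `A ∈ ℳ`; if any of (1)–(3) fails,
then `ind(B₁, A) ⬝ ind(B₂, A) = 0` for all `A ∈ ℳ`. -/
theorem stmt17 (B₁ B₂ : MMat) :
    (((∀ i ∈ B₁.R ∩ B₂.R, ∀ j ∈ B₁.C ∩ B₂.C, B₁.entry i j = B₂.entry i j) ∧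
      (∀ i ∈ B₁.R \ B₂.R, ∀ j ∈ B₁.C ∩ B₂.C, B₁.entry i j = 0) ∧
      (∀ i ∈ B₂.R \ B₁.R, ∀ j ∈ B₁.C ∩ B₂.C, B₂.entry i j = 0)) →
        ∀ A : MMat, MMat.ind B₁ A * MMat.ind B₂ A = MMat.ind (MMat.csum B₁ B₂) A) ∧
    (¬ ((∀ i ∈ B₁.R ∩ B₂.R, ∀ j ∈ B₁.C ∩ B₂.C, B₁.entry i j = B₂.entry i j) ∧
      (∀ i ∈ B₁.R \ B₂.R, ∀ j ∈ B₁.C ∩ B₂.C, B₁.entry i j = 0) ∧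
      (∀ i ∈ B₂.R \ B₁.R, ∀ j ∈ B₁.C ∩ B₂.C, B₂.entry i j = 0)) →
        ∀ A : MMat, MMat.ind B₁ A * MMat.ind B₂ A = 0) := by
  classical
  constructor
  · rintro ⟨c1, c2, c3⟩ A
    have fwd : MMat.Ok B₁ A → MMat.Ok B₂ A → MMat.Ok (MMat.csum B₁ B₂) A := by
      rintro ⟨hR1, hC1, ha1, hv1⟩ ⟨hR2, hC2, ha2, hv2⟩
      refine ⟨?_, ?_, ?_, ?_⟩
      · rw [MMat.csum_R]; exact Finset.union_subset hR1 hR2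
      · rw [MMat.csum_C]; exact Finset.union_subset hC1 hC2
      · intro i hi j hj
        rw [MMat.csum_R, Finset.mem_union] at hi
        rw [MMat.csum_C, Finset.mem_union] at hj
        rw [MMat.csum_entry]
        by_cases h : i ∈ B₁.R ∧ j ∈ B₁.C
        · rw [if_pos h]; exact ha1 i h.1 j h.2
        · rw [if_neg h]
          rcases hi with hi1 | hi2
          · have hj2 : j ∈ B₂.C := by
              rcases hj with hj1 | hj2
              · exact absurd ⟨hi1, hj1⟩ h
              · exact hj2
            by_cases hi2 : i ∈ B₂.R
            · exact ha2 i hi2 j hj2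
            · have hB2 : B₂.entry i j = 0 := by
                by_contra hne; exact hi2 (B₂.supp i j hne).1
              rw [hB2]; exact hv2 i (hR1 hi1) hi2 j hj2
          · by_cases hj2 : j ∈ B₂.C
            · exact ha2 i hi2 j hj2
            · have hj1 : j ∈ B₁.C := hj.resolve_right hj2
              have hi1 : i ∉ B₁.R := fun hi1 => h ⟨hi1, hj1⟩
              have hB2 : B₂.entry i j = 0 := by
                by_contra hne; exact hj2 (B₂.supp i j hne).2
              rw [hB2]; exact hv1 i (hR2 hi2) hi1 j hj1
      · intro i hiA hi j hj
        rw [MMat.csum_R, Finset.mem_union, not_or] at hi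
        rw [MMat.csum_C, Finset.mem_union] at hj
        rcases hj with hj1 | hj2
        · exact hv1 i hiA hi.1 j hj1
        · exact hv2 i hiA hi.2 j hj2
    have bwd : MMat.Ok (MMat.csum B₁ B₂) A → MMat.Ok B₁ A ∧ MMat.Ok B₂ A := by
      rintro ⟨hRc, hCc, hac, hvc⟩
      rw [MMat.csum_R] at hRc
      rw [MMat.csum_C] at hCc
      have hR1 : B₁.R ⊆ A.R := Finset.union_subset_iff.mp hRc |>.1
      have hR2 : B₂.R ⊆ A.R := Finset.union_subset_iff.mp hRc |>.2
      have hC1 : B₁.C ⊆ A.C := Finset.union_subset_iff.mp hCc |>.1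
      have hC2 : B₂.C ⊆ A.C := Finset.union_subset_iff.mp hCc |>.2
      have hacu : ∀ i ∈ B₁.R ∪ B₂.R, ∀ j ∈ B₁.C ∪ B₂.C,
          A.entry i j = if i ∈ B₁.R ∧ j ∈ B₁.C then B₁.entry i j else B₂.entry i j := by
        intro i hi j hj
        rw [← MMat.csum_entry]
        exact hac i (by rw [MMat.csum_R]; exact hi) j (by rw [MMat.csum_C]; exact hj)
      have hvcu : ∀ i ∈ A.R, i ∉ B₁.R ∪ B₂.R → ∀ j ∈ B₁.C ∪ B₂.C, A.entry i j = 0 := by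
        intro i hiA hi j hj
        exact hvc i hiA (by rw [MMat.csum_R]; exact hi) j (by rw [MMat.csum_C]; exact hj)
      refine ⟨⟨hR1, hC1, ?_, ?_⟩, hR2, hC2, ?_, ?_⟩
      · intro i hi j hj
        rw [hacu i (Finset.mem_union_left _ hi) j (Finset.mem_union_left _ hj),
          if_pos ⟨hi, hj⟩]
      · intro i hiA hi1 j hj1
        by_cases hi2 : i ∈ B₂.R
        · rw [hacu i (Finset.mem_union_right _ hi2) j (Finset.mem_union_left _ hj1),
            if_neg (fun h => hi1 h.1)]
          by_cases hj2 : j ∈ B₂.C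
          · exact c3 i (Finset.mem_sdiff.mpr ⟨hi2, hi1⟩) j (Finset.mem_inter.mpr ⟨hj1, hj2⟩)
          · by_contra hne; exact hj2 (B₂.supp i j hne).2
        · exact hvcu i hiA (by simp [hi1, hi2]) j (Finset.mem_union_left _ hj1)
      · intro i hi j hj
        rw [hacu i (Finset.mem_union_right _ hi) j (Finset.mem_union_right _ hj)]
        by_cases h : i ∈ B₁.R ∧ j ∈ B₁.C
        · rw [if_pos h]
          exact c1 i (Finset.mem_inter.mpr ⟨h.1, hi⟩) j (Finset.mem_inter.mpr ⟨h.2, hj⟩)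
        · rw [if_neg h]
      · intro i hiA hi2 j hj2
        by_cases hi1 : i ∈ B₁.R
        · rw [hacu i (Finset.mem_union_left _ hi1) j (Finset.mem_union_right _ hj2)]
          by_cases hj1 : j ∈ B₁.C
          · rw [if_pos ⟨hi1, hj1⟩]
            exact c2 i (Finset.mem_sdiff.mpr ⟨hi1, hi2⟩) j (Finset.mem_inter.mpr ⟨hj1, hj2⟩)
          · rw [if_neg (fun h => hj1 h.2)]
            by_contra hne; exact hi2 (B₂.supp i j hne).1
        · exact hvcu i hiA (by simp [hi1, hi2]) j (Finset.mem_union_right _ hj2)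
    rw [MMat.ind_eq, MMat.ind_eq, MMat.ind_eq]
    by_cases h1 : MMat.Ok B₁ A <;> by_cases h2 : MMat.Ok B₂ A
    · rw [if_pos h1, if_pos h2, if_pos (fwd h1 h2), mul_one]
    · rw [if_pos h1, if_neg h2, if_neg (fun h => h2 (bwd h).2), mul_zero]
    · rw [if_neg h1, if_pos h2, if_neg (fun h => h1 (bwd h).1), zero_mul]
    · rw [if_neg h1, if_neg h2, if_neg (fun h => h1 (bwd h).1), zero_mul]
  · intro hn A
    rw [MMat.ind_eq, MMat.ind_eq]
    by_cases h1 : MMat.Ok B₁ A <;> by_cases h2 : MMat.Ok B₂ A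
    · exact absurd (MMat.both_ok B₁ B₂ A h1 h2) hn
    · rw [if_pos h1, if_neg h2, mul_zero]
    · rw [if_neg h1, zero_mul]
    · rw [if_neg h1, zero_mul]
end

section
/- Fix complex weights w_j and positive integers ν_j for all j ∈ ℕ, and let k be a positive integer. Then there exist complex numbers μ_k(B, w, ν), one for each matrix B ∈ ℳ_k, such that for every A ∈ ℳ one has σ_k(A, w, ν) = ∑_{B ∈ ℳ_k} ind(B, A) μ_k(B, w, ν), where for each A ∈ ℳ only finitely many summands are non-zero. -/
namespace MMat

theorem ext' (A B : MMat) (hR : A.R = B.R) (hC : A.C = B.C) (he : A.entry = B.entry) :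
    A = B := by
  cases A; cases B
  simp only at hR hC he
  subst hR; subst hC; subst he
  rfl

/-- Restriction of `A` to a nonempty subset `D` of its columns (rows being those
that have a nonzero entry in some column of `D`). -/
def res (A : MMat) (D : Finset ℕ) (hD : D.Nonempty) (hDC : D ⊆ A.C) : MMat where
  R := A.R.filter (fun i => ∃ j ∈ D, A.entry i j ≠ 0)
  C := D
  hR := by
    obtain ⟨j, hj⟩ := hD
    obtain ⟨i, hi, hne⟩ := A.noZeroCol j (hDC hj)
    exact ⟨i, Finset.mem_filter.2 ⟨hi, j, hj, hne⟩⟩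
  hC := hD
  entry := fun i j => if j ∈ D then A.entry i j else 0
  supp := by
    intro i j h
    by_cases hj : j ∈ D
    · simp only [if_pos hj] at h
      exact ⟨Finset.mem_filter.2 ⟨(A.supp i j h).1, j, hj, h⟩, hj⟩
    · simp only [if_neg hj] at h; exact (h rfl).elim
  noZeroRow := by
    intro i hi
    obtain ⟨hiR, j, hj, hne⟩ := Finset.mem_filter.1 hi
    exact ⟨j, hj, by simp only [if_pos hj]; exact hne⟩
  noZeroCol := by
    intro j hj
    obtain ⟨i, hi, hne⟩ := A.noZeroCol j (hDC hj)
    exact ⟨i, Finset.mem_filter.2 ⟨hi, j, hj, hne⟩, by simp only [if_pos hj]; exact hne⟩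

lemma res_C (A : MMat) (D : Finset ℕ) (hD : D.Nonempty) (hDC : D ⊆ A.C) :
    (A.res D hD hDC).C = D := rfl

lemma res_entry (A : MMat) (D : Finset ℕ) (hD : D.Nonempty) (hDC : D ⊆ A.C) (i j : ℕ) :
    (A.res D hD hDC).entry i j = if j ∈ D then A.entry i j else 0 := rfl

lemma mem_res_R (A : MMat) (D : Finset ℕ) (hD : D.Nonempty) (hDC : D ⊆ A.C) (i : ℕ) :
    i ∈ (A.res D hD hDC).R ↔ i ∈ A.R ∧ ∃ j ∈ D, A.entry i j ≠ 0 := Finset.mem_filter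

lemma res_self (A : MMat) : A.res A.C A.hC (Finset.Subset.refl _) = A := by
  apply ext'
  · apply Finset.filter_true_of_mem
    intro i hi
    exact A.noZeroRow i hi
  · rfl
  · funext i j
    rw [res_entry]
    by_cases hj : j ∈ A.C
    · rw [if_pos hj]
    · rw [if_neg hj]
      by_contra h
      exact hj (A.supp i j (fun hc => h hc.symm)).2

lemma res_res (A : MMat) (D E : Finset ℕ) (hD : D.Nonempty) (hDC : D ⊆ A.C)
    (hE : E.Nonempty) (hED : E ⊆ D) :
    (A.res D hD hDC).res E hE hED = A.res E hE (hED.trans hDC) := by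
  apply ext'
  · ext i
    rw [mem_res_R (A.res D hD hDC) E hE hED, mem_res_R, mem_res_R]
    constructor
    · rintro ⟨⟨hiA, _⟩, j, hj, hne⟩
      rw [res_entry, if_pos (hED hj)] at hne
      exact ⟨hiA, j, hj, hne⟩
    · rintro ⟨hiA, j, hj, hne⟩
      exact ⟨⟨hiA, j, hED hj, hne⟩, j, hj, by rwa [res_entry, if_pos (hED hj)]⟩
  · rfl
  · funext i j
    rw [res_entry (A.res D hD hDC) E hE hED, res_entry, res_entry]
    by_cases hj : j ∈ E
    · rw [if_pos hj, if_pos hj, if_pos (hED hj)]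
    · rw [if_neg hj, if_neg hj]

lemma ind_res (A : MMat) (D : Finset ℕ) (hD : D.Nonempty) (hDC : D ⊆ A.C) :
    ind (A.res D hD hDC) A = 1 := by
  rw [ind, if_pos]
  refine ⟨Finset.filter_subset _ _, hDC, ?_, ?_⟩
  · intro i hi j hj
    have hj' : j ∈ D := hj
    rw [res_entry, if_pos hj']
  · intro i hiA hiB j hj
    by_contra hne
    exact hiB ((mem_res_R A D hD hDC i).2 ⟨hiA, j, hj, hne⟩)

lemma eq_res_of_ind_ne_zero {B A : MMat} (h : ind B A ≠ 0) :
    ∃ h2 : B.C ⊆ A.C, B = A.res B.C B.hC h2 := by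
  rw [ind] at h
  split at h
  case isFalse => exact absurd rfl h
  case isTrue hcond =>
    obtain ⟨hRsub, hCsub, hagree, hvan⟩ := hcond
    refine ⟨hCsub, ext' _ _ ?_ rfl ?_⟩
    · ext i
      rw [mem_res_R]
      constructor
      · intro hi
        obtain ⟨j, hj, hne⟩ := B.noZeroRow i hi
        exact ⟨hRsub hi, j, hj, by rwa [hagree i hi j hj]⟩
      · rintro ⟨hiA, j, hj, hne⟩
        by_contra hiB
        exact hne (hvan i hiA hiB j hj)
    · funext i j
      rw [res_entry]
      by_cases hj : j ∈ B.C
      · rw [if_pos hj]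
        by_cases hi : i ∈ B.R
        · exact (hagree i hi j hj).symm
        · have h1 : B.entry i j = 0 := by
            by_contra hc; exact hi (B.supp i j hc).1
          by_cases hiA : i ∈ A.R
          · rw [h1, hvan i hiA hi j hj]
          · rw [h1]
            by_contra hc
            exact hiA (A.supp i j (fun hcc => hc hcc.symm)).1
      · rw [if_neg hj]
        by_contra hc
        exact hj (B.supp i j hc).2

end MMat

section NewtonMob
open Finset Polynomial

private lemma powC (x : Finset ℕ) : (∑ m ∈ x.powerset, (-1 : ℂ) ^ m.card) = if x = ∅ then 1 else 0 := by
  have := Finset.sum_powerset_neg_one_pow_card (x := x)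
  have h2 : ((∑ m ∈ x.powerset, (-1 : ℤ) ^ m.card : ℤ) : ℂ) = ∑ m ∈ x.powerset, (-1 : ℂ) ^ m.card := by
    push_cast; ring_nf
  rw [← h2, this]
  split <;> simp


private lemma negsq (n : ℕ) : (-1 : ℂ)^n * (-1:ℂ)^n = 1 := by
  rw [← pow_add, ← two_mul, pow_mul]; norm_num

private lemma neg_one_pow_sub (a b : ℕ) (h : b ≤ a) :
    (-1:ℂ)^(a-b) = (-1:ℂ)^a * (-1:ℂ)^b := by
  obtain ⟨c, rfl⟩ := Nat.exists_eq_add_of_le h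
  rw [Nat.add_sub_cancel_left, pow_add]
  calc (-1:ℂ)^c = ((-1:ℂ)^b * (-1:ℂ)^b) * (-1:ℂ)^c := by rw [negsq, one_mul]
    _ = (-1:ℂ)^b * (-1:ℂ)^c * (-1:ℂ)^b := by ring

/-- key alternating identity -/
private lemma alt1 (D W : Finset ℕ) (h : W ⊆ D) :
    ∑ E ∈ D.powerset.filter (fun E => W ⊆ E), (-1 : ℂ) ^ (D.card - E.card) =
      if W = D then 1 else 0 := by
  classical
  have hbij : ∑ E ∈ D.powerset.filter (fun E => W ⊆ E), (-1 : ℂ) ^ (D.card - E.card)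
      = ∑ F ∈ (D \ W).powerset, (-1 : ℂ) ^ ((D \ W).card - F.card) := by
    apply Finset.sum_nbij' (fun E => E \ W) (fun F => F ∪ W)
    · intro E hE
      simp only [mem_filter, mem_powerset] at hE
      exact mem_powerset.2 (sdiff_subset_sdiff hE.1 (Finset.Subset.refl W))
    · intro F hF
      simp only [mem_powerset] at hF
      simp only [mem_filter, mem_powerset]
      constructor
      · exact union_subset (hF.trans (sdiff_subset)) h
      · exact subset_union_right
    · intro E hE
      simp only [mem_filter, mem_powerset] at hE
      exact sdiff_union_of_subset hE.2
    · intro F hF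
      simp only [mem_powerset] at hF
      rw [union_sdiff_right]
      exact sdiff_eq_self_of_disjoint (disjoint_of_subset_left hF (sdiff_disjoint))
    · intro E hE
      simp only [mem_filter, mem_powerset] at hE
      congr 1
      have h1 : (E \ W).card = E.card - W.card := card_sdiff_of_subset hE.2
      have h2 : (D \ W).card = D.card - W.card := card_sdiff_of_subset h
      have hWE := card_le_card hE.2
      have hED := card_le_card hE.1
      omega
  rw [hbij]
  have : ∀ F ∈ (D \ W).powerset, (-1 : ℂ) ^ ((D \ W).card - F.card) = (-1 : ℂ)^(D\W).card * (-1:ℂ)^F.card := by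
    intro F hF
    have hle := card_le_card (mem_powerset.1 hF)
    rw [neg_one_pow_sub _ _ hle]
  rw [Finset.sum_congr rfl this, ← Finset.mul_sum, powC]
  by_cases hWD : W = D
  · simp [hWD]
  · have : D \ W ≠ ∅ := by
      intro hc
      exact hWD (Finset.Subset.antisymm h (fun x hx => by
        by_contra hxW
        exact absurd (mem_sdiff.2 ⟨hx, hxW⟩) (by simp [hc])))
    simp [this, hWD]

private lemma alt2 (D W : Finset ℕ) (h : W ⊆ D) :
    ∑ E ∈ D.powerset.filter (fun E => W ⊆ E), (-1 : ℂ) ^ (E.card - W.card) =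
      if W = D then 1 else 0 := by
  classical
  have fact : ∀ E ∈ D.powerset.filter (fun E => W ⊆ E),
      (-1:ℂ)^(E.card - W.card) = (-1:ℂ)^(D.card - W.card) * (-1:ℂ)^(D.card - E.card) := by
    intro E hE
    simp only [mem_filter, mem_powerset] at hE
    rw [neg_one_pow_sub _ _ (card_le_card hE.2), neg_one_pow_sub _ _ (card_le_card hE.1),
      neg_one_pow_sub _ _ (card_le_card (hE.2.trans hE.1))]
    calc (-1:ℂ)^E.card * (-1:ℂ)^W.card
        = ((-1:ℂ)^D.card * (-1:ℂ)^D.card) * ((-1:ℂ)^E.card * (-1:ℂ)^W.card) := by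
          rw [negsq, one_mul]
      _ = (-1:ℂ)^D.card * (-1:ℂ)^W.card * ((-1:ℂ)^D.card * (-1:ℂ)^E.card) := by ring
  rw [Finset.sum_congr rfl fact, ← Finset.mul_sum, alt1 D W h]
  by_cases hWD : W = D <;> simp [hWD]

noncomputable def mobOf (g : Finset ℕ → ℂ) (D : Finset ℕ) : ℂ :=
  ∑ E ∈ D.powerset, (-1 : ℂ) ^ (D.card - E.card) * g E

private lemma pow_filter (D E : Finset ℕ) (h : E ⊆ D) :
    D.powerset.filter (fun U => U ⊆ E) = E.powerset := by
  ext U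
  simp only [mem_filter, mem_powerset]
  exact ⟨fun h2 => h2.2, fun h2 => ⟨h2.trans h, h2⟩⟩

/-- uniqueness: if `g` is the subset-sum of `c`, then `mobOf g = c`. -/
lemma mob_uniq (g c : Finset ℕ → ℂ) (D : Finset ℕ)
    (h : ∀ E ∈ D.powerset, g E = ∑ U ∈ E.powerset, c U) :
    mobOf g D = c D := by
  classical
  unfold mobOf
  rw [Finset.sum_congr rfl (fun E hE => by rw [h E hE])]
  have step1 : ∀ E ∈ D.powerset, (-1:ℂ)^(D.card - E.card) * ∑ U ∈ E.powerset, c U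
      = ∑ U ∈ D.powerset, (if U ⊆ E then (-1:ℂ)^(D.card - E.card) * c U else 0) := by
    intro E hE
    rw [← Finset.sum_filter, pow_filter D E (mem_powerset.1 hE), Finset.mul_sum]
  rw [Finset.sum_congr rfl step1, Finset.sum_comm]
  have step2 : ∀ U ∈ D.powerset,
      (∑ E ∈ D.powerset, if U ⊆ E then (-1:ℂ)^(D.card - E.card) * c U else 0)
      = (if U = D then 1 else 0) * c U := by
    intro U hU
    rw [Finset.sum_ite, Finset.sum_const_zero, add_zero, ← Finset.sum_mul,
      alt1 D U (mem_powerset.1 hU)]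
  rw [Finset.sum_congr rfl step2,
    Finset.sum_eq_single_of_mem D (Finset.mem_powerset_self D)
      (fun b _ hne => by simp [hne])]
  simp

/-- inversion: `g` is the subset-sum of `mobOf g`. -/
lemma mob_inv (g : Finset ℕ → ℂ) (D : Finset ℕ) :
    ∑ E ∈ D.powerset, mobOf g E = g D := by
  classical
  unfold mobOf
  have step1 : ∀ E ∈ D.powerset, ∑ F ∈ E.powerset, (-1:ℂ)^(E.card - F.card) * g F
      = ∑ F ∈ D.powerset, (if F ⊆ E then (-1:ℂ)^(E.card - F.card) * g F else 0) := by
    intro E hE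
    rw [← Finset.sum_filter, pow_filter D E (mem_powerset.1 hE)]
  rw [Finset.sum_congr rfl step1, Finset.sum_comm]
  have step2 : ∀ F ∈ D.powerset,
      (∑ E ∈ D.powerset, if F ⊆ E then (-1:ℂ)^(E.card - F.card) * g F else 0)
      = (if F = D then 1 else 0) * g F := by
    intro F hF
    rw [Finset.sum_ite, Finset.sum_const_zero, add_zero, ← Finset.sum_mul,
      alt2 D F (mem_powerset.1 hF)]
  rw [Finset.sum_congr rfl step2,
    Finset.sum_eq_single_of_mem D (Finset.mem_powerset_self D)
      (fun b _ hne => by simp [hne])]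
  simp

private lemma ext_sum (D E : Finset ℕ) (hE : E ⊆ D) (F : Finset ℕ → ℂ) :
    ∑ U ∈ E.powerset, F U = ∑ U ∈ D.powerset, if U ⊆ E then F U else 0 := by
  rw [Finset.sum_ite, Finset.sum_const_zero, add_zero, pow_filter D E hE]

/-- Product rule: Möbius transforms of pointwise products vanish above the sum
of the degrees. -/
lemma mob_mul_vanish (Cs : Finset ℕ) (g h : Finset ℕ → ℂ) (s t : ℕ)
    (hg : ∀ E, E ⊆ Cs → s < E.card → mobOf g E = 0)
    (hh : ∀ E, E ⊆ Cs → t < E.card → mobOf h E = 0)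
    (D : Finset ℕ) (hD : D ⊆ Cs) (hcard : s + t < D.card) :
    mobOf (fun E => g E * h E) D = 0 := by
  classical
  unfold mobOf
  have step1 : ∀ E ∈ D.powerset, (-1:ℂ)^(D.card - E.card) * (g E * h E)
      = ∑ U ∈ D.powerset, ∑ V ∈ D.powerset,
          (if U ⊆ E ∧ V ⊆ E then (-1:ℂ)^(D.card - E.card) * (mobOf g U * mobOf h V) else 0) := by
    intro E hE
    have hE' := Finset.mem_powerset.1 hE
    rw [← mob_inv g E, ← mob_inv h E, Finset.sum_mul_sum,
      ext_sum D E hE' (fun U => ∑ V ∈ E.powerset, mobOf g U * mobOf h V)]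
    rw [Finset.mul_sum]
    apply Finset.sum_congr rfl
    intro U _
    by_cases hU : U ⊆ E
    · simp only [hU, if_true, true_and]
      rw [ext_sum D E hE' (fun V => mobOf g U * mobOf h V), Finset.mul_sum]
      apply Finset.sum_congr rfl
      intro V _
      by_cases hV : V ⊆ E <;> simp [hV, mul_comm, mul_left_comm]
    · simp [hU]
  rw [Finset.sum_congr rfl step1, Finset.sum_comm]
  have step2 : ∀ U ∈ D.powerset,
      (∑ E ∈ D.powerset, ∑ V ∈ D.powerset,
        if U ⊆ E ∧ V ⊆ E then (-1:ℂ)^(D.card - E.card) * (mobOf g U * mobOf h V) else 0)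
      = ∑ V ∈ D.powerset,
          (if U ∪ V = D then 1 else 0) * (mobOf g U * mobOf h V) := by
    intro U hU
    rw [Finset.sum_comm]
    apply Finset.sum_congr rfl
    intro V hV
    have hcond : ∀ E, (U ⊆ E ∧ V ⊆ E) ↔ U ∪ V ⊆ E := by
      intro E; rw [Finset.union_subset_iff]
    have : (∑ E ∈ D.powerset,
        if U ⊆ E ∧ V ⊆ E then (-1:ℂ)^(D.card - E.card) * (mobOf g U * mobOf h V) else 0)
        = ∑ E ∈ D.powerset.filter (fun E => U ∪ V ⊆ E),
            (-1:ℂ)^(D.card - E.card) * (mobOf g U * mobOf h V) := by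
      rw [Finset.sum_filter]
      exact Finset.sum_congr rfl fun E _ => by exact if_congr (hcond E) rfl rfl
    rw [this, ← Finset.sum_mul,
      alt1 D (U ∪ V) (Finset.union_subset (Finset.mem_powerset.1 hU) (Finset.mem_powerset.1 hV))]
  rw [Finset.sum_congr rfl step2]
  apply Finset.sum_eq_zero
  intro U hU
  apply Finset.sum_eq_zero
  intro V hV
  by_cases huv : U ∪ V = D
  · have hcards : D.card ≤ U.card + V.card := huv ▸ Finset.card_union_le U V
    have : s < U.card ∨ t < V.card := by omega
    rcases this with h1 | h1
    · rw [hg U ((Finset.mem_powerset.1 hU).trans hD) h1]; ring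
    · rw [hh V ((Finset.mem_powerset.1 hV).trans hD) h1]; ring
  · simp [huv]


private lemma coeff_zero_prod (t : Multiset ℂ) :
    (t.map fun b => 1 + Polynomial.C b * Polynomial.X).prod.coeff 0 = 1 := by
  induction t using Multiset.induction with
  | empty => simp
  | cons a t ih =>
    rw [Multiset.map_cons, Multiset.prod_cons, Polynomial.mul_coeff_zero, ih]
    simp

private lemma coeff_succ_mul (a : ℂ) (P : Polynomial ℂ) (i : ℕ) (hi : 1 ≤ i) :
    ((1 + Polynomial.C a * Polynomial.X) * P).coeff i = P.coeff i + a * P.coeff (i - 1) := by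
  obtain ⟨i, rfl⟩ : ∃ n, i = n + 1 := ⟨i - 1, by omega⟩
  rw [add_mul, one_mul, Polynomial.coeff_add, mul_assoc, Polynomial.coeff_C_mul,
    Polynomial.coeff_X_mul]
  simp

/-- Newton's identity for polynomials of the form `∏ (1 + b X)`, with power sums of
`-b` (the inverse roots). -/
lemma newton_aux (s : Multiset ℂ) : ∀ j : ℕ, 1 ≤ j →
    (s.map fun b => (-b)^j).sum
      + (∑ i ∈ Finset.Ico 1 j,
          ((s.map fun b => 1 + Polynomial.C b * Polynomial.X).prod.coeff i)
            * (s.map fun b => (-b)^(j-i)).sum)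
      + (j : ℂ) * ((s.map fun b => 1 + Polynomial.C b * Polynomial.X).prod.coeff j) = 0 := by
  induction s using Multiset.induction with
  | empty =>
    intro j hj
    simp [Polynomial.coeff_one, Nat.one_le_iff_ne_zero.mp hj]
  | cons a t ih =>
    intro j hj
    set P := (t.map fun b => 1 + Polynomial.C b * Polynomial.X).prod with hP
    set c : ℕ → ℂ := fun i => P.coeff i with hc
    set τ : ℕ → ℂ := fun i => (t.map fun b => (-b)^i).sum with hτ
    have hprod : ((a ::ₘ t).map fun b => 1 + Polynomial.C b * Polynomial.X).prod
        = (1 + Polynomial.C a * Polynomial.X) * P := by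
      rw [Multiset.map_cons, Multiset.prod_cons]
    have hcoeff : ∀ i, 1 ≤ i →
        ((a ::ₘ t).map fun b => 1 + Polynomial.C b * Polynomial.X).prod.coeff i
          = c i + a * c (i-1) := by
      intro i hi; rw [hprod]; exact coeff_succ_mul a P i hi
    have hsum : ∀ i, ((a ::ₘ t).map fun b => (-b)^i).sum = (-a)^i + τ i := by
      intro i; rw [Multiset.map_cons, Multiset.sum_cons]
    have hc0 : c 0 = 1 := coeff_zero_prod t
    rw [hsum]
    rw [Finset.sum_congr rfl (fun i hi => by
      rw [hcoeff i (Finset.mem_Ico.1 hi).1, hsum (j - i)])]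
    rw [hcoeff j hj]
    rcases Nat.lt_or_ge j 2 with hj2 | hj2
    · -- j = 1
      have hj1 : j = 1 := by omega
      subst hj1
      have ih1 := ih 1 le_rfl
      simp only [Finset.Ico_self, Finset.sum_empty] at ih1 ⊢
      push_cast at ih1 ⊢
      linear_combination ih1 + a * hc0
    · -- j ≥ 2
      obtain ⟨m, rfl⟩ : ∃ m, j = m + 2 := ⟨j - 2, by omega⟩
      have IH2 := ih (m+2) (by omega)
      have IH1 := ih (m+1) (by omega)
      set S1 := ∑ i ∈ Finset.Ico 1 (m+2), c i * τ (m+2-i) with hS1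
      have hIco : ∀ (F : ℕ → ℂ), ∑ i ∈ Finset.Ico 1 (m+2), F i
          = ∑ i ∈ Finset.range (m+1), F (1+i) := by
        intro F
        rw [Finset.sum_Ico_eq_sum_range]
        norm_num
      have hsplit : ∑ i ∈ Finset.Ico 1 (m+2),
          (c i + a * c (i-1)) * ((-a)^(m+2-i) + τ (m+2-i))
          = S1 + (∑ i ∈ Finset.Ico 1 (m+2), c i * (-a)^(m+2-i))
            + a * (∑ i ∈ Finset.Ico 1 (m+2), c (i-1) * τ (m+2-i))
            + a * (∑ i ∈ Finset.Ico 1 (m+2), c (i-1) * (-a)^(m+2-i)) := by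
        rw [hS1, Finset.mul_sum, Finset.mul_sum, ← Finset.sum_add_distrib,
          ← Finset.sum_add_distrib, ← Finset.sum_add_distrib]
        exact Finset.sum_congr rfl fun i _ => by ring
      have hS3 : (∑ i ∈ Finset.Ico 1 (m+2), c (i-1) * τ (m+2-i))
          = c 0 * τ (m+1) + ∑ i ∈ Finset.Ico 1 (m+1), c i * τ (m+1-i) := by
        rw [hIco]
        have : ∀ i ∈ Finset.range (m+1), c (1+i-1) * τ (m+2-(1+i)) = c i * τ (m+1-i) := by
          intro i _
          have h1 : 1 + i - 1 = i := by omega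
          have h2 : m + 2 - (1+i) = m+1-i := by omega
          rw [h1, h2]
        rw [Finset.sum_congr rfl this, Finset.range_eq_Ico,
          Finset.sum_eq_sum_Ico_succ_bot (by omega : 0 < m+1)]
        norm_num
      set G : ℕ → ℂ := fun i => c i * (-a)^(m+2-i) with hGdef
      have hS24 : (∑ i ∈ Finset.Ico 1 (m+2), c i * (-a)^(m+2-i))
          + a * (∑ i ∈ Finset.Ico 1 (m+2), c (i-1) * (-a)^(m+2-i))
          = -(a * c (m+1)) - (-a)^(m+2) := by
        have e2 : (∑ i ∈ Finset.Ico 1 (m+2), c i * (-a)^(m+2-i))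
            = ∑ i ∈ Finset.range (m+1), G (i+1) := by
          rw [hIco]
          apply Finset.sum_congr rfl
          intro i _
          have h1 : 1 + i = i + 1 := by omega
          rw [h1, hGdef]
        have e4 : a * (∑ i ∈ Finset.Ico 1 (m+2), c (i-1) * (-a)^(m+2-i))
            = ∑ i ∈ Finset.range (m+1), (- G i) := by
          rw [hIco, Finset.mul_sum]
          apply Finset.sum_congr rfl
          intro i hi
          have hi' : i < m + 1 := Finset.mem_range.1 hi
          have h1 : 1 + i - 1 = i := by omega
          have h2 : m + 2 - (1+i) = m+1-i := by omega
          have h3 : m + 2 - i = (m+1-i) + 1 := by omega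
          rw [h1, h2, hGdef]
          simp only [h3]
          ring
        rw [e2, e4, ← Finset.sum_add_distrib]
        have : ∀ i ∈ Finset.range (m+1), G (i+1) + (- G i) = G (i+1) - G i := by
          intro i _; ring
        rw [Finset.sum_congr rfl this, Finset.sum_range_sub]
        have hG0 : G 0 = (-a)^(m+2) := by rw [hGdef]; simp [hc0]
        have hGm : G (m+1) = -(a * c (m+1)) := by
          rw [hGdef]
          have : m + 2 - (m+1) = 1 := by omega
          simp only [this]
          ring
        rw [hG0, hGm]
      rw [hsplit]
      rw [hc0] at hS3
      push_cast at IH1 IH2 hS24 hS3 ⊢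
      linear_combination IH2 + hS24 + a * hS3 + a * IH1

/-- Newton's identity for an arbitrary polynomial with constant coefficient 1,
in terms of inverse roots. -/
lemma poly_newton (p : Polynomial ℂ) (h0 : p.coeff 0 = 1) (j : ℕ) (hj : 1 ≤ j) :
    (p.roots.map fun r => (r⁻¹)^j).sum
      + (∑ i ∈ Finset.Ico 1 j, p.coeff i * (p.roots.map fun r => (r⁻¹)^(j-i)).sum)
      + (j:ℂ) * p.coeff j = 0 := by
  have hp0 : p ≠ 0 := fun h => by simp [h] at h0
  set s : Multiset ℂ := p.roots.map (fun r => -r⁻¹) with hs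
  have hsums : ∀ n : ℕ, (s.map fun b => (-b)^n).sum = (p.roots.map fun r => (r⁻¹)^n).sum := by
    intro n
    rw [hs, Multiset.map_map]
    congr 1
    apply Multiset.map_congr rfl
    intro r _
    simp
  have hq : (s.map fun b => 1 + Polynomial.C b * Polynomial.X).prod = p := by
    have hsplit : p = Polynomial.C p.leadingCoeff * (p.roots.map fun a => Polynomial.X - Polynomial.C a).prod :=
      Polynomial.Splits.eq_prod_roots (IsAlgClosed.splits p)
    have hrne : ∀ r ∈ p.roots, r ≠ 0 := by
      intro r hr hrz
      have := Polynomial.isRoot_of_mem_roots hr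
      rw [hrz] at this
      rw [Polynomial.IsRoot, ← Polynomial.coeff_zero_eq_eval_zero, h0] at this
      exact one_ne_zero this
    have hfac : (s.map fun b => 1 + Polynomial.C b * Polynomial.X).prod
        = Polynomial.C ((p.roots.map fun r => -r⁻¹).prod)
          * (p.roots.map fun a => Polynomial.X - Polynomial.C a).prod := by
      rw [hs, Multiset.map_map]
      have : ∀ r ∈ p.roots,
          ((fun b => 1 + Polynomial.C b * Polynomial.X) ∘ (fun r => -r⁻¹)) r
          = (Polynomial.C (-r⁻¹)) * (Polynomial.X - Polynomial.C r) := by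
        intro r hr
        have hr0 : r ≠ 0 := hrne r hr
        simp only [Function.comp]
        rw [mul_sub, ← Polynomial.C_mul]
        have hru : (-r⁻¹ * r : ℂ) = -1 := by field_simp
        rw [hru]
        simp only [map_neg, map_one]
        ring
      have hCprod : (p.roots.map fun r => Polynomial.C (-r⁻¹)).prod
          = Polynomial.C ((p.roots.map fun r => -r⁻¹).prod) := by
        rw [map_multiset_prod (Polynomial.C : ℂ →+* Polynomial ℂ), Multiset.map_map]
        rfl
      rw [Multiset.map_congr rfl this, Multiset.prod_map_mul, hCprod]
    set P := (p.roots.map fun a => Polynomial.X - Polynomial.C a).prod with hPdef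
    have h1 : ((p.roots.map fun r => -r⁻¹).prod) * P.coeff 0 = 1 := by
      have := coeff_zero_prod s
      rw [hfac] at this
      rwa [Polynomial.mul_coeff_zero, Polynomial.coeff_C_zero] at this
    have h2 : p.leadingCoeff * P.coeff 0 = 1 := by
      have h0' := h0
      rw [hsplit, Polynomial.mul_coeff_zero, Polynomial.coeff_C_zero] at h0'
      exact h0'
    have hP0 : P.coeff 0 ≠ 0 := by
      intro hc; rw [hc, mul_zero] at h1; exact one_ne_zero h1.symm
    have hlc : (p.roots.map fun r => -r⁻¹).prod = p.leadingCoeff := by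
      field_simp at h1 h2 ⊢
      exact mul_right_cancel₀ hP0 (h1.trans (h2.symm.trans (mul_comm _ _)))
    rw [hfac, hlc, ← hsplit]
  have := newton_aux s j hj
  rw [hq] at this
  rw [← hsums j]
  have hmid : ∑ i ∈ Finset.Ico 1 j, p.coeff i * (p.roots.map fun r => (r⁻¹)^(j-i)).sum
      = ∑ i ∈ Finset.Ico 1 j, p.coeff i * (s.map fun b => (-b)^(j-i)).sum :=
    Finset.sum_congr rfl (fun i _ => by rw [← hsums (j-i)])
  rw [hmid]
  exact this

lemma mob_congr (g h : Finset ℕ → ℂ) (D : Finset ℕ)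
    (hgh : ∀ E ∈ D.powerset, g E = h E) : mobOf g D = mobOf h D :=
  Finset.sum_congr rfl fun E hE => by rw [hgh E hE]

lemma mob_empty (g : Finset ℕ → ℂ) : mobOf g ∅ = g ∅ := by
  unfold mobOf
  rw [Finset.powerset_empty, Finset.sum_singleton]
  simp

end NewtonMob


namespace MMat
open Finset Polynomial

open Classical in
/-- Solutions supported on a column set `D`, encoded as total functions. -/
noncomputable def SolT (A : MMat) (ν : ℕ → ℕ) (D : Finset ℕ) : Finset (ℕ → ℕ) :=
  ((D.pi fun j => Finset.range (ν j + 1)).image fun ξ j => if h : j ∈ D then ξ j h else 0).filter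
    (fun g => ∀ i ∈ A.R, ∑ j ∈ D, A.entry i j * (g j : ℤ) = 0)

lemma mem_SolT (A : MMat) (ν : ℕ → ℕ) (D : Finset ℕ) (g : ℕ → ℕ) :
    g ∈ SolT A ν D ↔ (∀ j, j ∉ D → g j = 0) ∧ (∀ j ∈ D, g j ≤ ν j) ∧
      (∀ i ∈ A.R, ∑ j ∈ D, A.entry i j * (g j : ℤ) = 0) := by
  classical
  constructor
  · intro hg
    obtain ⟨hmem, hrow⟩ := Finset.mem_filter.1 hg
    obtain ⟨ξ, hξ, rfl⟩ := Finset.mem_image.1 hmem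
    refine ⟨fun j hj => dif_neg hj, fun j hj => ?_, hrow⟩
    have h2 := Finset.mem_range.1 (Finset.mem_pi.1 hξ j hj)
    simp only [dif_pos hj]
    omega
  · rintro ⟨hv, hb, hr⟩
    refine Finset.mem_filter.2 ⟨Finset.mem_image.2 ⟨fun j _ => g j, ?_, ?_⟩, hr⟩
    · exact Finset.mem_pi.2 (fun j hj => Finset.mem_range.2 (by have := hb j hj; omega))
    · funext j
      by_cases hj : j ∈ D
      · exact dif_pos hj
      · rw [dif_neg hj, hv j hj]

open Classical in
/-- The coefficient functions (5.1): sums over solutions with given total weight. -/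
noncomputable def aD (A : MMat) (w : ℕ → ℂ) (ν : ℕ → ℕ) (m : ℕ) (D : Finset ℕ) : ℂ :=
  ∑ g ∈ (SolT A ν D).filter (fun g => ∑ j ∈ D, g j = m), ∏ j ∈ D, w j ^ g j

open Classical in
/-- Sums over strictly positive solutions with given total weight. -/
noncomputable def fS (A : MMat) (w : ℕ → ℂ) (ν : ℕ → ℕ) (m : ℕ) (U : Finset ℕ) : ℂ :=
  ∑ g ∈ (SolT A ν U).filter (fun g => (∑ j ∈ U, g j = m) ∧ ∀ j ∈ U, g j ≠ 0),
    ∏ j ∈ U, w j ^ g j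

open Classical in
/-- `σ_j` of the restriction of `A` to a subset of columns. -/
noncomputable def sigD (A : MMat) (w : ℕ → ℂ) (ν : ℕ → ℕ) (j : ℕ) (D : Finset ℕ) : ℂ :=
  if h : D.Nonempty ∧ D ⊆ A.C then sigma (A.res D h.1 h.2) w ν j else 0

lemma aD_zero (A : MMat) (w : ℕ → ℂ) (ν : ℕ → ℕ) (D : Finset ℕ) :
    aD A w ν 0 D = 1 := by
  classical
  have hset : (SolT A ν D).filter (fun g => ∑ j ∈ D, g j = 0) = {fun _ => 0} := by
    ext g
    simp only [Finset.mem_filter, Finset.mem_singleton, mem_SolT]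
    constructor
    · rintro ⟨⟨hv, _, _⟩, htot⟩
      funext j
      by_cases hj : j ∈ D
      · exact (Finset.sum_eq_zero_iff).1 htot j hj
      · exact hv j hj
    · rintro rfl
      exact ⟨⟨fun _ _ => rfl, fun j _ => Nat.zero_le _, fun i _ => by simp⟩, by simp⟩
  unfold aD
  rw [Finset.filter_congr_decidable, hset, Finset.sum_singleton]
  simp

lemma aD_decomp (A : MMat) (w : ℕ → ℂ) (ν : ℕ → ℕ) (m : ℕ) (D : Finset ℕ) :
    aD A w ν m D = ∑ U ∈ D.powerset, fS A w ν m U := by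
  classical
  have hmemp : ∀ (U : Finset ℕ) (g : ℕ → ℕ),
      g ∈ (SolT A ν U).filter (fun g => (∑ j ∈ U, g j = m) ∧ ∀ j ∈ U, g j ≠ 0)
      ↔ ((∀ j, j ∉ U → g j = 0) ∧ (∀ j ∈ U, g j ≤ ν j) ∧
          (∀ i ∈ A.R, ∑ j ∈ U, A.entry i j * (g j : ℤ) = 0)) ∧
          (∑ j ∈ U, g j = m) ∧ ∀ j ∈ U, g j ≠ 0 := by
    intro U g
    rw [Finset.mem_filter, mem_SolT]
  have hsplit : (SolT A ν D).filter (fun g => ∑ j ∈ D, g j = m)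
      = D.powerset.biUnion (fun U =>
          (SolT A ν U).filter (fun g => (∑ j ∈ U, g j = m) ∧ ∀ j ∈ U, g j ≠ 0)) := by
    ext g
    rw [Finset.mem_filter, mem_SolT, Finset.mem_biUnion]
    constructor
    · rintro ⟨⟨hv, hb, hr⟩, htot⟩
      refine ⟨D.filter (fun j => g j ≠ 0), Finset.mem_powerset.2 (Finset.filter_subset _ _),
        (hmemp _ g).2 ⟨⟨?_, ?_, ?_⟩, ?_, ?_⟩⟩
      · intro j hj
        by_cases hjD : j ∈ D
        · by_contra hc
          exact hj (Finset.mem_filter.2 ⟨hjD, hc⟩)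
        · exact hv j hjD
      · intro j hj; exact hb j (Finset.mem_filter.1 hj).1
      · intro i hi
        have he : ∑ j ∈ D.filter (fun j => g j ≠ 0), A.entry i j * (g j:ℤ)
            = ∑ j ∈ D, A.entry i j * (g j:ℤ) := by
          apply Finset.sum_subset (Finset.filter_subset _ _)
          intro j hjD hjF
          have hg0 : g j = 0 := by
            by_contra hc; exact hjF (Finset.mem_filter.2 ⟨hjD, hc⟩)
          rw [hg0]
          simp
        rw [he]
        exact hr i hi
      · have he : ∑ j ∈ D.filter (fun j => g j ≠ 0), g j = ∑ j ∈ D, g j := by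
          apply Finset.sum_subset (Finset.filter_subset _ _)
          intro j hjD hjF
          by_contra hc; exact hjF (Finset.mem_filter.2 ⟨hjD, hc⟩)
        rw [he]
        exact htot
      · intro j hj; exact (Finset.mem_filter.1 hj).2
    · rintro ⟨U, hUD, hg⟩
      obtain ⟨⟨hv, hb, hr⟩, htot, hstr⟩ := (hmemp U g).1 hg
      have hUD' : U ⊆ D := Finset.mem_powerset.1 hUD
      have hvD : ∀ j ∈ D, j ∉ U → g j = 0 := fun j _ hjU => hv j hjU
      refine ⟨⟨?_, ?_, ?_⟩, ?_⟩
      · intro j hj; exact hv j (fun hc => hj (hUD' hc))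
      · intro j hj
        by_cases hjU : j ∈ U
        · exact hb j hjU
        · rw [hv j hjU]; exact Nat.zero_le _
      · intro i hi
        have he : ∑ j ∈ U, A.entry i j * (g j:ℤ) = ∑ j ∈ D, A.entry i j * (g j:ℤ) := by
          apply Finset.sum_subset hUD'
          intro j hjD hjU
          rw [hv j hjU]
          simp
        rw [← he]
        exact hr i hi
      · rw [← Finset.sum_subset hUD' (fun j _ hjU => hv j hjU)]
        exact htot
  have hdisj : (↑D.powerset : Set (Finset ℕ)).PairwiseDisjoint (fun U =>
      (SolT A ν U).filter (fun g => (∑ j ∈ U, g j = m) ∧ ∀ j ∈ U, g j ≠ 0)) := by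
    intro U₁ h₁ U₂ h₂ hne
    simp only [Function.onFun]
    rw [Finset.disjoint_left]
    intro g hg1 hg2
    apply hne
    obtain ⟨⟨hv1, _, _⟩, _, hstr1⟩ := (hmemp U₁ g).1 hg1
    obtain ⟨⟨hv2, _, _⟩, _, hstr2⟩ := (hmemp U₂ g).1 hg2
    ext j
    constructor
    · intro hj
      by_contra hc
      exact hstr1 j hj (hv2 j hc)
    · intro hj
      by_contra hc
      exact hstr2 j hj (hv1 j hc)
  unfold aD fS
  rw [Finset.filter_congr_decidable, hsplit, Finset.sum_biUnion hdisj]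
  apply Finset.sum_congr rfl
  intro U hU
  rw [Finset.filter_congr_decidable]
  apply Finset.sum_congr rfl
  intro g hg
  obtain ⟨⟨hv, _, _⟩, _, _⟩ := (hmemp U g).1 hg
  symm
  apply Finset.prod_subset (Finset.mem_powerset.1 hU)
  intro j _ hjU
  rw [hv j hjU, pow_zero]

lemma fS_vanish (A : MMat) (w : ℕ → ℂ) (ν : ℕ → ℕ) (m : ℕ) (U : Finset ℕ)
    (h : m < U.card) : fS A w ν m U = 0 := by
  classical
  unfold fS
  rw [Finset.filter_congr_decidable]
  rw [Finset.filter_eq_empty_iff.2 ?emp, Finset.sum_empty]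
  case emp =>
    rintro g _ ⟨htot, hstr⟩
    have hle : U.card ≤ ∑ j ∈ U, g j := by
      have : U.card = ∑ _j ∈ U, 1 := by simp
      rw [this]
      exact Finset.sum_le_sum (fun j hj => by have := hstr j hj; omega)
    omega

lemma aD_coeff (A : MMat) (w : ℕ → ℂ) (ν : ℕ → ℕ) (m : ℕ) (D : Finset ℕ)
    (hD : D.Nonempty) (hDC : D ⊆ A.C) :
    ((A.res D hD hDC).wPoly w ν).coeff m = aD A w ν m D := by
  classical
  -- translation between attach-indexed and plain sums
  have keyN : ∀ (ξ : (j:ℕ) → j ∈ D → ℕ),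
      ∑ j ∈ D.attach, ξ j.1 j.2 = ∑ j ∈ D, (if h : j ∈ D then ξ j h else 0) := by
    intro ξ
    rw [← Finset.sum_attach D (fun j => if h : j ∈ D then ξ j h else 0)]
    exact Finset.sum_congr rfl (fun x _ => by rw [dif_pos x.2])
  have keyZ : ∀ (ξ : (j:ℕ) → j ∈ D → ℕ) (i : ℕ),
      ∑ j ∈ D.attach, A.entry i j.1 * (ξ j.1 j.2 : ℤ)
        = ∑ j ∈ D, A.entry i j * (((if h : j ∈ D then ξ j h else 0 : ℕ)) : ℤ) := by
    intro ξ i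
    rw [← Finset.sum_attach D (fun j => A.entry i j * (((if h : j ∈ D then ξ j h else 0 : ℕ)) : ℤ))]
    exact Finset.sum_congr rfl (fun x _ => by rw [dif_pos x.2])
  have keyC : ∀ (ξ : (j:ℕ) → j ∈ D → ℕ),
      ∏ j ∈ D.attach, w j.1 ^ ξ j.1 j.2
        = ∏ j ∈ D, w j ^ (if h : j ∈ D then ξ j h else 0) := by
    intro ξ
    rw [← Finset.prod_attach D (fun j => w j ^ (if h : j ∈ D then ξ j h else 0))]
    exact Finset.prod_congr rfl (fun x _ => by rw [dif_pos x.2])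
  have hBrow : ∀ (ξ : (j:ℕ) → j ∈ D → ℕ) (i : ℕ),
      ∑ j ∈ D.attach, (A.res D hD hDC).entry i j.1 * (ξ j.1 j.2 : ℤ)
        = ∑ j ∈ D.attach, A.entry i j.1 * (ξ j.1 j.2 : ℤ) :=
    fun ξ i => Finset.sum_congr rfl (fun x _ => by rw [res_entry, if_pos x.2])
  have hBrowg : ∀ (g : ℕ → ℕ) (i : ℕ),
      ∑ j ∈ D.attach, (A.res D hD hDC).entry i j.1 * (g j.1 : ℤ)
        = ∑ j ∈ D, A.entry i j * (g j : ℤ) := by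
    intro g i
    rw [← Finset.sum_attach D (fun j => A.entry i j * (g j : ℤ))]
    exact Finset.sum_congr rfl (fun x _ => by rw [res_entry, if_pos x.2])
  -- rows over the restricted matrix vs over `A`
  have hrowt : ∀ (g : ℕ → ℕ),
      (∀ i ∈ (A.res D hD hDC).R, ∑ j ∈ D, A.entry i j * (g j:ℤ) = 0)
      ↔ (∀ i ∈ A.R, ∑ j ∈ D, A.entry i j * (g j:ℤ) = 0) := by
    intro g
    constructor
    · intro h i hi
      by_cases hiB : i ∈ (A.res D hD hDC).R
      · exact h i hiB
      · apply Finset.sum_eq_zero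
        intro j hj
        have hz : A.entry i j = 0 := by
          by_contra hc
          exact hiB ((mem_res_R A D hD hDC i).2 ⟨hi, j, hj, hc⟩)
        rw [hz, zero_mul]
    · intro h i hi
      exact h i ((mem_res_R A D hD hDC i).1 hi).1
  -- Step 1: the polynomial as a sum of monomials
  have hwp : (A.res D hD hDC).wPoly w ν
      = ∑ ξ ∈ (A.res D hD hDC).solSet ν,
          Polynomial.C (∏ j ∈ D.attach, w j.1 ^ ξ j.1 j.2)
            * Polynomial.X ^ (∑ j ∈ D.attach, ξ j.1 j.2) := by
    unfold wPoly
    apply Finset.sum_congr rfl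
    intro ξ _
    simp only [mul_pow, ← Polynomial.C_pow]
    rw [Finset.prod_mul_distrib, ← map_prod, Finset.prod_pow_eq_pow_sum]
    rfl
  -- Step 2: extract the coefficient
  have hco : ((A.res D hD hDC).wPoly w ν).coeff m
      = ∑ ξ ∈ ((A.res D hD hDC).solSet ν).filter
            (fun ξ => ∑ j ∈ D.attach, ξ j.1 j.2 = m),
          ∏ j ∈ D.attach, w j.1 ^ ξ j.1 j.2 := by
    rw [hwp, Polynomial.finset_sum_coeff, Finset.sum_filter]
    apply Finset.sum_congr rfl
    intro ξ _
    rw [Polynomial.coeff_C_mul, Polynomial.coeff_X_pow]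
    by_cases h : (∑ j ∈ D.attach, ξ j.1 j.2) = m
    · rw [if_pos h.symm, mul_one, if_pos h]
    · rw [if_neg (fun hc => h hc.symm), mul_zero, if_neg h]
  rw [hco]
  unfold aD
  -- Step 3: the bijection `ξ ↦ g`
  refine Finset.sum_nbij' (fun ξ (j : ℕ) => if h : j ∈ D then ξ j h else 0)
    (fun (g : ℕ → ℕ) => (fun (j : ℕ) (_ : j ∈ D) => g j)) ?_ ?_ ?_ ?_ ?_
  · -- forward membership
    intro ξ hξ
    obtain ⟨hsol, htot⟩ := Finset.mem_filter.1 hξ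
    obtain ⟨hpi, hrow⟩ := Finset.mem_filter.1 hsol
    refine Finset.mem_filter.2 ⟨(mem_SolT A ν D _).2 ⟨fun j hj => dif_neg hj,
      fun j hj => ?_, ?_⟩, ?_⟩
    · show (if h : j ∈ D then ξ j h else 0) ≤ ν j
      rw [dif_pos hj]
      have := Finset.mem_range.1 (Finset.mem_pi.1 hpi j hj)
      omega
    · show ∀ i ∈ A.R, ∑ j ∈ D, A.entry i j * (((if h : j ∈ D then ξ j h else 0 : ℕ)) : ℤ) = 0
      apply (hrowt _).1
      intro i hi
      rw [← keyZ ξ i, ← hBrow ξ i]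
      exact hrow i hi
    · show ∑ j ∈ D, (if h : j ∈ D then ξ j h else 0) = m
      rw [← keyN ξ]
      exact htot
  · -- backward membership
    intro g hg
    obtain ⟨hsolg, htot⟩ := Finset.mem_filter.1 hg
    obtain ⟨hv, hb, hr⟩ := (mem_SolT A ν D g).1 hsolg
    refine Finset.mem_filter.2 ⟨Finset.mem_filter.2 ⟨?_, ?_⟩, ?_⟩
    · show (fun (j : ℕ) (_ : j ∈ D) => g j) ∈ D.pi (fun j => Finset.range (ν j + 1))
      exact Finset.mem_pi.2 (fun j hj => Finset.mem_range.2 (by have := hb j hj; omega))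
    · intro i hi
      show ∑ j ∈ D.attach, (A.res D hD hDC).entry i j.1 * ((g j.1 : ℕ) : ℤ) = 0
      rw [hBrowg g i]
      exact (hrowt g).2 hr i hi
    · show ∑ j ∈ D.attach, g j.1 = m
      rw [Finset.sum_attach D (fun j => g j)]
      exact htot
  · -- left inverse
    intro ξ _
    funext j hj
    exact dif_pos hj
  · -- right inverse
    intro g hg
    obtain ⟨hsolg, _⟩ := Finset.mem_filter.1 hg
    obtain ⟨hv, _, _⟩ := (mem_SolT A ν D g).1 hsolg
    funext j
    show (if h : j ∈ D then g j else 0) = g j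
    by_cases hj : j ∈ D
    · exact dif_pos hj
    · rw [dif_neg hj, hv j hj]
  · -- values agree
    intro ξ _
    exact keyC ξ

lemma aD_empty (A : MMat) (w : ℕ → ℂ) (ν : ℕ → ℕ) (m : ℕ) (hm : 1 ≤ m) :
    aD A w ν m ∅ = 0 := by
  classical
  unfold aD
  rw [Finset.filter_congr_decidable]
  rw [Finset.filter_eq_empty_iff.2 ?emp, Finset.sum_empty]
  case emp =>
    intro g _
    simp
    omega

lemma sigD_rec (A : MMat) (w : ℕ → ℂ) (ν : ℕ → ℕ) (D : Finset ℕ) (hDC : D ⊆ A.C)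
    (j : ℕ) (hj : 1 ≤ j) :
    sigD A w ν j D + (∑ i ∈ Finset.Ico 1 j, aD A w ν i D * sigD A w ν (j-i) D)
      + (j:ℂ) * aD A w ν j D = 0 := by
  by_cases hD : D.Nonempty
  · have h0 : ((A.res D hD hDC).wPoly w ν).coeff 0 = 1 := by
      rw [aD_coeff A w ν 0 D hD hDC]; exact aD_zero A w ν D
    have hnewton := poly_newton ((A.res D hD hDC).wPoly w ν) h0 j hj
    have e1 : ∀ n : ℕ, sigD A w ν n D
        = (((A.res D hD hDC).wPoly w ν).roots.map fun r => (r⁻¹)^n).sum := by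
      intro n
      rw [sigD, dif_pos ⟨hD, hDC⟩]
      rfl
    rw [e1 j, ← aD_coeff A w ν j D hD hDC]
    have emid : ∑ i ∈ Finset.Ico 1 j, aD A w ν i D * sigD A w ν (j-i) D
        = ∑ i ∈ Finset.Ico 1 j, ((A.res D hD hDC).wPoly w ν).coeff i
            * (((A.res D hD hDC).wPoly w ν).roots.map fun r => (r⁻¹)^(j-i)).sum :=
      Finset.sum_congr rfl (fun i _ => by rw [aD_coeff A w ν i D hD hDC, e1 (j-i)])
    rw [emid]
    exact hnewton
  · have hDe : D = ∅ := Finset.not_nonempty_iff_eq_empty.1 hD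
    subst hDe
    have hs : ∀ n, sigD A w ν n ∅ = 0 := fun n => by
      rw [sigD, dif_neg]
      rintro ⟨h1, _⟩
      exact Finset.not_nonempty_empty h1
    rw [hs j, aD_empty A w ν j hj,
      Finset.sum_congr rfl (fun i hi => by
        rw [aD_empty A w ν i (Finset.mem_Ico.1 hi).1, zero_mul]),
      Finset.sum_const_zero]
    ring

lemma aD_mob (A : MMat) (w : ℕ → ℂ) (ν : ℕ → ℕ) (m : ℕ) (D : Finset ℕ) :
    mobOf (aD A w ν m) D = fS A w ν m D :=
  mob_uniq _ _ D (fun E _ => aD_decomp A w ν m E)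

lemma sig_deg (A : MMat) (w : ℕ → ℂ) (ν : ℕ → ℕ) (j : ℕ) (hj : 1 ≤ j) :
    ∀ D, D ⊆ A.C → j < D.card → mobOf (sigD A w ν j) D = 0 := by
  revert hj
  induction j using Nat.strong_induction_on with
  | _ j ih =>
    intro hj D hDC hcard
    have hcong : mobOf (sigD A w ν j) D
        = mobOf (fun E => -((j:ℂ) * aD A w ν j E)
            - ∑ i ∈ Finset.Ico 1 j, aD A w ν i E * sigD A w ν (j-i) E) D := by
      apply mob_congr
      intro E hE
      have hrec := sigD_rec A w ν E ((Finset.mem_powerset.1 hE).trans hDC) j hj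
      linear_combination hrec
    rw [hcong]
    unfold mobOf
    have hexp : ∀ E ∈ D.powerset,
        (-1:ℂ)^(D.card - E.card) * (-((j:ℂ) * aD A w ν j E)
            - ∑ i ∈ Finset.Ico 1 j, aD A w ν i E * sigD A w ν (j-i) E)
        = -((j:ℂ) * ((-1:ℂ)^(D.card - E.card) * aD A w ν j E))
          - ∑ i ∈ Finset.Ico 1 j,
              (-1:ℂ)^(D.card - E.card) * (aD A w ν i E * sigD A w ν (j-i) E) := by
      intro E _
      rw [mul_sub, Finset.mul_sum]
      ring
    rw [Finset.sum_congr rfl hexp, Finset.sum_sub_distrib]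
    have h1 : ∑ E ∈ D.powerset, -((j:ℂ) * ((-1:ℂ)^(D.card - E.card) * aD A w ν j E)) = 0 := by
      rw [Finset.sum_neg_distrib, ← Finset.mul_sum]
      have : (∑ E ∈ D.powerset, (-1:ℂ)^(D.card - E.card) * aD A w ν j E) = mobOf (aD A w ν j) D := rfl
      rw [this, aD_mob, fS_vanish A w ν j D hcard, mul_zero, neg_zero]
    have h2 : ∑ E ∈ D.powerset, ∑ i ∈ Finset.Ico 1 j,
        (-1:ℂ)^(D.card - E.card) * (aD A w ν i E * sigD A w ν (j-i) E) = 0 := by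
      rw [Finset.sum_comm]
      apply Finset.sum_eq_zero
      intro i hi
      obtain ⟨hi1, hij⟩ := Finset.mem_Ico.1 hi
      have : (∑ E ∈ D.powerset, (-1:ℂ)^(D.card - E.card) * (aD A w ν i E * sigD A w ν (j-i) E))
          = mobOf (fun E => aD A w ν i E * sigD A w ν (j-i) E) D := rfl
      rw [this]
      apply mob_mul_vanish A.C _ _ i (j-i)
      · intro E _ hiE
        rw [aD_mob]
        exact fS_vanish A w ν i E hiE
      · intro E hEC hjE
        exact ih (j-i) (by omega) (by omega) E hEC hjE
      · exact hDC
      · omega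
    rw [h1, h2]
    ring

lemma sigD_res (A : MMat) (w : ℕ → ℂ) (ν : ℕ → ℕ) (E : Finset ℕ) (hE : E.Nonempty)
    (hEC : E ⊆ A.C) (j : ℕ) (D : Finset ℕ) (hDE : D ⊆ E) :
    sigD (A.res E hE hEC) w ν j D = sigD A w ν j D := by
  by_cases hD : D.Nonempty
  · have h1 : D.Nonempty ∧ D ⊆ (A.res E hE hEC).C := ⟨hD, hDE⟩
    have h2 : D.Nonempty ∧ D ⊆ A.C := ⟨hD, hDE.trans hEC⟩
    rw [sigD, sigD, dif_pos h1, dif_pos h2]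
    congr 1
    exact res_res A E D hE hEC hD hDE
  · rw [sigD, sigD, dif_neg (fun hc => hD hc.1), dif_neg (fun hc => hD hc.1)]

end MMat

/-- **Lemma 5.3.** For every `k ≥ 1` there exist complex numbers `μ_k(B, w, ν)`, one for
each matrix `B ∈ ℳ_k` (matrices with at most `k` columns), such that for every `A ∈ ℳ`,
`σ_k(A, w, ν) = ∑_{B ∈ ℳ_k} ind(B, A) μ_k(B, w, ν)`, where for each `A` only finitely
many summands are non-zero. -/
theorem stmt18 (w : ℕ → ℂ) (ν : ℕ → ℕ) (hν : ∀ j, 0 < ν j) (k : ℕ) (hk : 0 < k) :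
    ∃ μ : MMat → ℂ, ∀ A : MMat,
      {B : MMat | B.C.card ≤ k ∧ MMat.ind B A * μ B ≠ 0}.Finite ∧
      A.sigma w ν k = ∑ᶠ (B : MMat) (_ : B.C.card ≤ k), MMat.ind B A * μ B := by
  classical
  use fun B => mobOf (MMat.sigD B w ν k) B.C
  intro A
  set μ : MMat → ℂ := fun B => mobOf (MMat.sigD B w ν k) B.C with hμdef
  have hμres : ∀ (D : Finset ℕ) (hD : D.Nonempty) (hDC : D ⊆ A.C),
      μ (A.res D hD hDC) = mobOf (MMat.sigD A w ν k) D := by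
    intro D hD hDC
    show mobOf (MMat.sigD (A.res D hD hDC) w ν k) D = mobOf (MMat.sigD A w ν k) D
    exact mob_congr _ _ D (fun E hE =>
      MMat.sigD_res A w ν D hD hDC k E (Finset.mem_powerset.1 hE))
  set P : Finset (Finset ℕ) := A.C.powerset.filter (fun E => E.Nonempty) with hPdef
  have hPne : ∀ E ∈ P, E.Nonempty := fun E hE => (Finset.mem_filter.1 hE).2
  have hPsub : ∀ E ∈ P, E ⊆ A.C := fun E hE =>
    Finset.mem_powerset.1 (Finset.mem_filter.1 hE).1
  set S : Finset MMat :=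
    P.attach.image (fun E => A.res E.1 (hPne E.1 E.2) (hPsub E.1 E.2)) with hSdef
  have hsupp : ∀ B : MMat, B.C.card ≤ k ∧ MMat.ind B A * μ B ≠ 0 → B ∈ S := by
    rintro B ⟨_, hne⟩
    have hindne : MMat.ind B A ≠ 0 := fun h => hne (by rw [h, zero_mul])
    obtain ⟨h2, hBeq⟩ := MMat.eq_res_of_ind_ne_zero hindne
    have hP : B.C ∈ P := Finset.mem_filter.2 ⟨Finset.mem_powerset.2 h2, B.hC⟩
    exact Finset.mem_image.2 ⟨⟨B.C, hP⟩, Finset.mem_attach _ _, hBeq.symm⟩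
  constructor
  · exact S.finite_toSet.subset (fun B hB => hsupp B hB)
  · have hinner : ∀ B : MMat,
        (∑ᶠ (_ : B.C.card ≤ k), MMat.ind B A * μ B)
          = if B.C.card ≤ k then MMat.ind B A * μ B else 0 :=
      fun B => finsum_eq_if
    rw [finsum_congr hinner]
    rw [finsum_eq_sum_of_support_subset _ (s := S) (fun B hB => by
      have : ¬ (if B.C.card ≤ k then MMat.ind B A * μ B else 0) = 0 := hB
      split at this
      · exact hsupp B ⟨by assumption, this⟩
      · exact absurd rfl this)]
    have hinj : ∀ E₁ ∈ P.attach, ∀ E₂ ∈ P.attach,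
        A.res E₁.1 (hPne E₁.1 E₁.2) (hPsub E₁.1 E₁.2)
          = A.res E₂.1 (hPne E₂.1 E₂.2) (hPsub E₂.1 E₂.2) → E₁ = E₂ := by
      intro E₁ _ E₂ _ h
      have := congrArg MMat.C h
      rw [MMat.res_C, MMat.res_C] at this
      exact Subtype.ext this
    rw [hSdef, Finset.sum_image hinj]
    have hterm : ∀ E ∈ P.attach,
        (if (A.res E.1 (hPne E.1 E.2) (hPsub E.1 E.2)).C.card ≤ k
          then MMat.ind (A.res E.1 (hPne E.1 E.2) (hPsub E.1 E.2)) A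
            * μ (A.res E.1 (hPne E.1 E.2) (hPsub E.1 E.2)) else 0)
        = mobOf (MMat.sigD A w ν k) E.1 := by
      intro E _
      rw [MMat.ind_res, one_mul, hμres E.1 (hPne E.1 E.2) (hPsub E.1 E.2)]
      have hc : (A.res E.1 (hPne E.1 E.2) (hPsub E.1 E.2)).C = E.1 := MMat.res_C _ _ _ _
      rw [hc]
      by_cases hcard : E.1.card ≤ k
      · rw [if_pos hcard]
      · rw [if_neg hcard]
        exact (MMat.sig_deg A w ν k hk E.1 (hPsub E.1 E.2) (not_le.1 hcard)).symm
    rw [Finset.sum_congr rfl hterm]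
    rw [Finset.sum_attach P (fun E => mobOf (MMat.sigD A w ν k) E)]
    have hext : ∑ E ∈ P, mobOf (MMat.sigD A w ν k) E
        = ∑ E ∈ A.C.powerset, mobOf (MMat.sigD A w ν k) E := by
      apply Finset.sum_subset (Finset.filter_subset _ _)
      intro E _ hEP
      have hEe : E = ∅ := by
        by_contra hc
        exact hEP (Finset.mem_filter.2 ⟨by assumption, Finset.nonempty_iff_ne_empty.2 hc⟩)
      subst hEe
      rw [mob_empty, MMat.sigD, dif_neg (fun hc => Finset.not_nonempty_empty hc.1)]
    rw [hext, mob_inv]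
    rw [MMat.sigD, dif_pos ⟨A.hC, Finset.Subset.refl _⟩]
    have : A.res A.C A.hC (Finset.Subset.refl _) = A := MMat.res_self A
    rw [this]
end
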